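/- arXiv:2605.14193 — 5 statements merged into one kernel-verified Lean document; each statement's English description precedes it below -/
import Mathlib

section
/- Suppose each X_i ⊆ ℝ is nonempty, convex, and compact, each h_i is continuously differentiable and μ_i-strongly convex with μ_i > 0, and the contraction condition ρ(δ·D^{-1}·|G|) < 1 holds, where |G| is the entrywise absolute value of G and D = diag(μ_1,…,μ_N). Then, for every price vector p, the consumer game admits exactly one Nash equilibrium x*(p). -/
open Matrix

/-- Spectral radius of a real square matrix: the supremum of `|λ|` over all
complex eigenvalues `λ`. -/
noncomputable def specRad {n : Type*} [Fintype n] [DecidableEq n]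
    (M : Matrix n n ℝ) : ℝ :=
  sSup {r : ℝ | ∃ z : ℂ, z ∈ spectrum ℂ (M.map (algebraMap ℝ ℂ)) ∧ r = ‖z‖}

open Filter Topology
open scoped ENNReal NNReal

lemma max_gap {X : Set ℝ} (hconv : Convex ℝ X) {h : ℝ → ℝ} {μ : ℝ}
    (hsc : ∀ x y : ℝ, h y ≥ h x + deriv h x * (y - x) + μ / 2 * (y - x) ^ 2)
    (s : ℝ) {z : ℝ} (hz : z ∈ X)
    (hmax : ∀ y ∈ X, s * y - h y ≤ s * z - h z) :
    ∀ y ∈ X, s * y - h y + μ / 2 * (y - z) ^ 2 ≤ s * z - h z := by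
  intro y hy
  -- for t ∈ (0,1), z + t(y - z) ∈ X
  have key : ∀ t ∈ Set.Ioo (0:ℝ) 1,
      μ / 2 * (1 - t) * (y - z) ^ 2 ≤ (s * z - h z) - (s * y - h y) := by
    intro t ht
    obtain ⟨ht0, ht1⟩ := ht
    set zt := z + t * (y - z) with hzt
    have hztX : zt ∈ X := by
      have := hconv hz hy (by linarith : (0:ℝ) ≤ 1 - t) ht0.le (by ring)
      convert this using 1
      simp only [smul_eq_mul, hzt]; ring
    have h1 := hsc zt z
    have h2 := hsc zt y
    have h3 := hmax zt hztX
    have e1 : z - zt = -(t * (y - z)) := by rw [hzt]; ring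
    have e2 : y - zt = (1 - t) * (y - z) := by rw [hzt]; ring
    rw [e1] at h1; rw [e2] at h2
    have hs : s * zt = (1 - t) * (s * z) + t * (s * y) := by rw [hzt]; ring
    have H1 := mul_le_mul_of_nonneg_left h1.le (by linarith : (0:ℝ) ≤ 1 - t)
    have H2 := mul_le_mul_of_nonneg_left h2.le ht0.le
    have hcomb : t * (μ / 2 * (1 - t) * (y - z) ^ 2)
        ≤ t * ((s * z - h z) - (s * y - h y)) := by nlinarith [H1, H2, h3, hs]
    exact (mul_le_mul_iff_right₀ ht0).mp hcomb
  have hlim : Tendsto (fun t : ℝ => μ / 2 * (1 - t) * (y - z) ^ 2) (𝓝[>] (0:ℝ))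
      (𝓝 (μ / 2 * (y - z) ^ 2)) := by
    have : ContinuousAt (fun t : ℝ => μ / 2 * (1 - t) * (y - z) ^ 2) 0 := by fun_prop
    have h2 : Tendsto (fun t : ℝ => μ / 2 * (1 - t) * (y - z) ^ 2) (𝓝[>] (0:ℝ))
        (𝓝 (μ / 2 * (1 - 0) * (y - z) ^ 2)) :=
      this.tendsto.mono_left (nhdsWithin_le_nhds (s := Set.Ioi (0:ℝ)))
    simpa using h2
  have hev : ∀ᶠ t in 𝓝[>] (0:ℝ), μ / 2 * (1 - t) * (y - z) ^ 2 ≤ (s * z - h z) - (s * y - h y) := by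
    filter_upwards [Ioo_mem_nhdsGT_of_mem (by simp : (0:ℝ) ∈ Set.Ico (0:ℝ) 1)] with t ht
    exact key t ht
  have := le_of_tendsto hlim hev
  linarith

lemma max_lip {X : Set ℝ} (hconv : Convex ℝ X) {h : ℝ → ℝ} {μ : ℝ}
    (hsc : ∀ x y : ℝ, h y ≥ h x + deriv h x * (y - x) + μ / 2 * (y - x) ^ 2)
    {s s' z z' : ℝ} (hz : z ∈ X) (hz' : z' ∈ X)
    (hmax : ∀ y ∈ X, s * y - h y ≤ s * z - h z)
    (hmax' : ∀ y ∈ X, s' * y - h y ≤ s' * z' - h z') :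
    μ * |z - z'| ≤ |s - s'| := by
  have A1 := max_gap hconv hsc s hz hmax z' hz'
  have A2 := max_gap hconv hsc s' hz' hmax' z hz
  have hsum : μ * (z - z') ^ 2 ≤ (s - s') * (z - z') := by nlinarith [A1, A2]
  rcases eq_or_ne z z' with rfl | hne
  · simp [abs_nonneg]
  · have habs : (s - s') * (z - z') ≤ |s - s'| * |z - z'| := by
      rw [← abs_mul]; exact le_abs_self _
    have hsq : μ * |z - z'| * |z - z'| = μ * (z - z') ^ 2 := by
      rw [mul_assoc, abs_mul_abs_self]; ring
    have hpos : 0 < |z - z'| := abs_pos.mpr (sub_ne_zero.mpr hne)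
    exact (mul_le_mul_iff_left₀ hpos).mp ((hsq.trans_le hsum).trans habs)

attribute [local instance] Matrix.linftyOpNormedRing Matrix.linftyOpNormedAlgebra

lemma rowsum_lt_one {N : ℕ} (hN : 0 < N) (M : Matrix (Fin N) (Fin N) ℝ)
    (hM : specRad M < 1) : ∃ (n : ℕ) (K : ℝ), 0 ≤ K ∧ K < 1 ∧
      ∀ i, ∑ j, |(M ^ n) i j| ≤ K := by
  haveI : NeZero N := ⟨hN.ne'⟩
  haveI : CompleteSpace (Matrix (Fin N) (Fin N) ℂ) := FiniteDimensional.complete ℂ _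
  set A := M.map (algebraMap ℝ ℂ) with hA
  -- the set of moduli of spectral values
  set S : Set ℝ := {r : ℝ | ∃ z : ℂ, z ∈ spectrum ℂ A ∧ r = ‖z‖} with hS
  have hbdd : BddAbove S := by
    refine ⟨‖A‖ * ‖(1 : Matrix (Fin N) (Fin N) ℂ)‖, ?_⟩
    rintro r ⟨z, hz, rfl⟩
    exact spectrum.norm_le_norm_mul_of_mem hz
  have hlt : ∀ z ∈ spectrum ℂ A, ‖z‖₊ < 1 := by
    intro z hz
    have hmem : (‖z‖ : ℝ) ∈ S := ⟨z, hz, rfl⟩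
    have := le_csSup hbdd hmem
    have h2 : ‖z‖ < 1 := lt_of_le_of_lt this hM
    rw [← NNReal.coe_lt_coe]
    simpa using h2
  have hsr : spectralRadius ℂ A < 1 := by
    have := spectrum.spectralRadius_lt_of_forall_lt A (r := 1) hlt
    simpa using this
  have hg := spectrum.pow_nnnorm_pow_one_div_tendsto_nhds_spectralRadius A
  have hev := hg.eventually_lt_const hsr
  obtain ⟨n, hn⟩ := hev.exists
  have hAn : ‖A ^ n‖₊ < 1 := by
    by_contra hcon
    push_neg at hcon
    have h1 : (1 : ℝ≥0∞) ≤ (‖A ^ n‖₊ : ℝ≥0∞) := by exact_mod_cast hcon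
    have : (1 : ℝ≥0∞) ≤ (‖A ^ n‖₊ : ℝ≥0∞) ^ (1 / (n : ℝ)) := by
      calc (1 : ℝ≥0∞) = 1 ^ (1 / (n : ℝ)) := (ENNReal.one_rpow _).symm
      _ ≤ _ := ENNReal.rpow_le_rpow h1 (by positivity)
    exact absurd hn (not_lt.mpr this)
  refine ⟨n, ‖A ^ n‖, norm_nonneg _, by exact_mod_cast hAn, ?_⟩
  intro i
  have hAn' : A ^ n = (M ^ n).map (algebraMap ℝ ℂ) := by
    rw [hA, ← RingHom.mapMatrix_apply, ← RingHom.mapMatrix_apply, map_pow]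
  have hrow : (∑ j, ‖(A ^ n) i j‖₊) ≤ ‖A ^ n‖₊ := by
    rw [Matrix.linfty_opNNNorm_def]
    exact Finset.le_sup (f := fun i => ∑ j, ‖(A ^ n) i j‖₊) (Finset.mem_univ i)
  have hrow' : (∑ j, ‖(A ^ n) i j‖) ≤ ‖A ^ n‖ := by
    have := NNReal.coe_le_coe.mpr hrow
    simpa [NNReal.coe_sum] using this
  calc ∑ j, |(M ^ n) i j| = ∑ j, ‖(A ^ n) i j‖ := by
        refine Finset.sum_congr rfl fun j _ => ?_
        rw [hAn']
        simp [Matrix.map_apply, Real.norm_eq_abs]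
    _ ≤ ‖A ^ n‖ := hrow'


/-- Utility of consumer `i` when choosing consumption `y` while the others play
according to the profile `x`, at price vector `p`. -/
noncomputable def utility {N : ℕ} (a b : Fin N → ℝ) (δ : ℝ) (G : Matrix (Fin N) (Fin N) ℝ)
    (h : Fin N → ℝ → ℝ) (p x : Fin N → ℝ) (i : Fin N) (y : ℝ) : ℝ :=
  (a i - b i * p i + δ * ∑ j, G i j * Function.update x i y j) * y - h i y

/-- `x` is a Nash equilibrium of the consumer game at price vector `p`. -/
def IsNashEq {N : ℕ} (X : Fin N → Set ℝ) (a b : Fin N → ℝ) (δ : ℝ)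
    (G : Matrix (Fin N) (Fin N) ℝ) (h : Fin N → ℝ → ℝ) (p x : Fin N → ℝ) : Prop :=
  ∀ i, x i ∈ X i ∧ ∀ y ∈ X i, utility a b δ G h p x i y ≤ utility a b δ G h p x i (x i)

/-- Uniqueness of the Nash equilibrium under the contraction condition
`ρ(δ D⁻¹ |G|) < 1`, with `D = diag(μ)` and `|G|` the entrywise absolute value. -/
theorem unique_nash_equilibrium_contraction {N : ℕ}
    (X : Fin N → Set ℝ)
    (hX : ∀ i, (X i).Nonempty ∧ Convex ℝ (X i) ∧ IsCompact (X i))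
    (a b : Fin N → ℝ) (δ : ℝ) (hδ : 0 ≤ δ)
    (G : Matrix (Fin N) (Fin N) ℝ) (hGdiag : ∀ i, G i i = 0)
    (h : Fin N → ℝ → ℝ) (hC1 : ∀ i, ContDiff ℝ 1 (h i))
    (μ : Fin N → ℝ) (hμ : ∀ i, 0 < μ i)
    (hsc : ∀ i, ∀ x y : ℝ,
      h i y ≥ h i x + deriv (h i) x * (y - x) + μ i / 2 * (y - x) ^ 2)
    (hcontr : specRad (δ • (Matrix.diagonal fun i => (μ i)⁻¹) *
        Matrix.of (fun i j => |G i j|)) < 1) :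
    ∀ p : Fin N → ℝ, ∃! x : Fin N → ℝ, IsNashEq X a b δ G h p x := by
  intro p
  rcases Nat.eq_zero_or_pos N with hN | hN
  · subst hN
    exact ⟨fun i => i.elim0, fun i => i.elim0, fun y _ => funext fun i => i.elim0⟩
  classical
  set M : Matrix (Fin N) (Fin N) ℝ :=
    δ • (Matrix.diagonal fun i => (μ i)⁻¹) * Matrix.of (fun i j => |G i j|) with hMdef
  have hMentry : ∀ i j, M i j = δ * ((μ i)⁻¹ * |G i j|) := by
    intro i j
    simp [hMdef, Matrix.smul_mul, Matrix.smul_apply, Matrix.diagonal_mul, smul_eq_mul,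
      Matrix.of_apply]
  have hMnn : ∀ i j, 0 ≤ M i j := by
    intro i j
    rw [hMentry]
    have := (hμ i).le
    positivity
  have hMpow : ∀ (n : ℕ) i j, 0 ≤ (M ^ n) i j := by
    intro n
    induction n with
    | zero =>
      intro i j
      rw [pow_zero]
      by_cases hij : i = j <;> simp [Matrix.one_apply, hij]
    | succ n ih =>
      intro i j
      rw [pow_succ, Matrix.mul_apply]
      exact Finset.sum_nonneg fun k _ => mul_nonneg (ih i k) (hMnn k j)
  -- rewrite utility
  set sfun : (Fin N → ℝ) → Fin N → ℝ := fun x i => a i - b i * p i + δ * ∑ j, G i j * x j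
    with hsfun
  have hutil : ∀ x i y, utility a b δ G h p x i y = sfun x i * y - h i y := by
    intro x i y
    unfold utility
    have e : ∑ j, G i j * Function.update x i y j = ∑ j, G i j * x j := by
      refine Finset.sum_congr rfl fun j _ => ?_
      rcases eq_or_ne j i with rfl | hj
      · simp [hGdiag j]
      · rw [Function.update_of_ne hj]
    rw [e, hsfun]
  -- best response
  have hexist : ∀ i (s : ℝ), ∃ z, z ∈ X i ∧ ∀ y ∈ X i, s * y - h i y ≤ s * z - h i z := by
    intro i s
    obtain ⟨z, hz, hmax⟩ := (hX i).2.2.exists_isMaxOn (hX i).1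
      (((continuous_const.mul continuous_id).sub (hC1 i).continuous).continuousOn
        (f := fun y : ℝ => s * y - h i y))
    exact ⟨z, hz, fun y hy => hmax hy⟩
  set T : (Fin N → ℝ) → Fin N → ℝ := fun x i => (hexist i (sfun x i)).choose with hTdef
  have hT1 : ∀ x i, T x i ∈ X i := fun x i => (hexist i (sfun x i)).choose_spec.1
  have hT2 : ∀ x i, ∀ y ∈ X i, sfun x i * y - h i y ≤ sfun x i * T x i - h i (T x i) :=
    fun x i => (hexist i (sfun x i)).choose_spec.2
  -- coordinatewise Lipschitz bound
  have hlipT : ∀ (x y : Fin N → ℝ) i, |T x i - T y i| ≤ ∑ j, M i j * |x j - y j| := by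
    intro x y i
    have hl := max_lip (hX i).2.1 (hsc i) (hT1 x i) (hT1 y i) (hT2 x i) (hT2 y i)
    have hμi := hμ i
    have hs : |sfun x i - sfun y i| ≤ δ * ∑ j, |G i j| * |x j - y j| := by
      have e : sfun x i - sfun y i = δ * ∑ j, G i j * (x j - y j) := by
        have e2 : ∑ j, G i j * (x j - y j) = (∑ j, G i j * x j) - ∑ j, G i j * y j := by
          rw [← Finset.sum_sub_distrib]
          exact Finset.sum_congr rfl fun j _ => by ring
        rw [hsfun]; simp only; rw [e2]; ring
      rw [e, abs_mul, abs_of_nonneg hδ]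
      refine mul_le_mul_of_nonneg_left ?_ hδ
      refine (Finset.abs_sum_le_sum_abs _ _).trans ?_
      refine Finset.sum_le_sum fun j _ => ?_
      rw [abs_mul]
    have hdiv : |T x i - T y i| ≤ (μ i)⁻¹ * |sfun x i - sfun y i| := by
      have h2 : μ i * |T x i - T y i| ≤ μ i * ((μ i)⁻¹ * |sfun x i - sfun y i|) := by
        rw [← mul_assoc, mul_inv_cancel₀ hμi.ne', one_mul]; exact hl
      exact le_of_mul_le_mul_left h2 hμi
    calc |T x i - T y i| ≤ (μ i)⁻¹ * |sfun x i - sfun y i| := hdiv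
      _ ≤ (μ i)⁻¹ * (δ * ∑ j, |G i j| * |x j - y j|) :=
          mul_le_mul_of_nonneg_left hs (inv_nonneg.mpr hμi.le)
      _ = ∑ j, M i j * |x j - y j| := by
          rw [Finset.mul_sum, Finset.mul_sum]
          exact Finset.sum_congr rfl fun j _ => by rw [hMentry i j]; ring
  -- iterate the bound
  have hiter : ∀ (n : ℕ) (x y : Fin N → ℝ) i,
      |T^[n] x i - T^[n] y i| ≤ ∑ j, (M ^ n) i j * |x j - y j| := by
    intro n
    induction n with
    | zero =>
      intro x y i
      simp [Matrix.one_apply]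
    | succ n ih =>
      intro x y i
      rw [Function.iterate_succ_apply', Function.iterate_succ_apply']
      calc |T (T^[n] x) i - T (T^[n] y) i|
          ≤ ∑ j, M i j * |T^[n] x j - T^[n] y j| := hlipT _ _ i
        _ ≤ ∑ j, M i j * (∑ l, (M ^ n) j l * |x l - y l|) :=
            Finset.sum_le_sum fun j _ => mul_le_mul_of_nonneg_left (ih x y j) (hMnn i j)
        _ = ∑ l, (M ^ (n + 1)) i l * |x l - y l| := by
            rw [pow_succ']
            simp_rw [Matrix.mul_apply, Finset.sum_mul, Finset.mul_sum]
            rw [Finset.sum_comm]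
            exact Finset.sum_congr rfl fun j _ => Finset.sum_congr rfl fun l _ => by ring
  -- contraction constant
  obtain ⟨n, K, hK0, hK1, hrow⟩ := rowsum_lt_one hN M hcontr
  have hrow' : ∀ i, (∑ j, (M ^ n) i j) ≤ K := by
    intro i
    refine le_trans (le_of_eq ?_) (hrow i)
    exact Finset.sum_congr rfl fun j _ => (abs_of_nonneg (hMpow n i j)).symm
  -- setup metric space
  set SS : Set (Fin N → ℝ) := Set.univ.pi X with hSS
  have hSSc : IsClosed SS := isClosed_set_pi fun i _ => ((hX i).2.2).isClosed
  haveI : Nonempty ↥SS :=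
    ⟨⟨fun i => ((hX i).1).choose, fun i _ => ((hX i).1).choose_spec⟩⟩
  haveI : CompleteSpace ↥SS := hSSc.completeSpace_coe
  set T' : ↥SS → ↥SS := fun x => ⟨T x, fun i _ => hT1 x i⟩ with hT'
  have hval : ∀ (m : ℕ) (x : ↥SS), ((T'^[m] x : ↥SS) : Fin N → ℝ) = T^[m] (x : Fin N → ℝ) := by
    intro m
    induction m with
    | zero => intro x; simp
    | succ m ih =>
      intro x
      rw [Function.iterate_succ_apply', Function.iterate_succ_apply', ← ih x]
  set K' : ℝ≥0 := ⟨K, hK0⟩ with hK'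
  have hKlt : K' < 1 := by
    rw [← NNReal.coe_lt_coe]
    exact_mod_cast hK1
  have hLip : LipschitzWith K' (T'^[n]) := by
    refine LipschitzWith.of_dist_le_mul fun x y => ?_
    have h1 : dist (T'^[n] x) (T'^[n] y)
        = dist (T^[n] (x : Fin N → ℝ)) (T^[n] (y : Fin N → ℝ)) := by
      rw [Subtype.dist_eq, hval, hval]
    have h2 : dist x y = dist (x : Fin N → ℝ) (y : Fin N → ℝ) := Subtype.dist_eq x y
    rw [h1, h2, show ((K' : ℝ≥0) : ℝ) = K from rfl]
    refine (dist_pi_le_iff (mul_nonneg hK0 dist_nonneg)).mpr fun i => ?_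
    calc dist (T^[n] (x : Fin N → ℝ) i) (T^[n] (y : Fin N → ℝ) i)
        = |T^[n] (x : Fin N → ℝ) i - T^[n] (y : Fin N → ℝ) i| := Real.dist_eq _ _
      _ ≤ ∑ j, (M ^ n) i j * |(x : Fin N → ℝ) j - (y : Fin N → ℝ) j| := hiter n _ _ i
      _ ≤ ∑ j, (M ^ n) i j * dist (x : Fin N → ℝ) (y : Fin N → ℝ) := by
          refine Finset.sum_le_sum fun j _ => mul_le_mul_of_nonneg_left ?_ (hMpow n i j)
          rw [← Real.dist_eq]
          exact dist_le_pi_dist (x : Fin N → ℝ) (y : Fin N → ℝ) j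
      _ = (∑ j, (M ^ n) i j) * dist (x : Fin N → ℝ) (y : Fin N → ℝ) :=
          (Finset.sum_mul _ _ _).symm
      _ ≤ K * dist (x : Fin N → ℝ) (y : Fin N → ℝ) :=
          mul_le_mul_of_nonneg_right (hrow' i) dist_nonneg
  have hcw : ContractingWith K' (T'^[n]) := ⟨hKlt, hLip⟩
  set z : ↥SS := ContractingWith.fixedPoint (T'^[n]) hcw with hzdef
  have hz : Function.IsFixedPt T' z := hcw.isFixedPt_fixedPoint_iterate
  -- Nash characterization
  have hNashIff : ∀ x, IsNashEq X a b δ G h p x ↔ ((∀ i, x i ∈ X i) ∧ T x = x) := by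
    intro x
    constructor
    · intro hx
      have hmem : ∀ i, x i ∈ X i := fun i => (hx i).1
      refine ⟨hmem, funext fun i => ?_⟩
      have hmax : ∀ y ∈ X i, sfun x i * y - h i y ≤ sfun x i * x i - h i (x i) := by
        intro y hy
        have := (hx i).2 y hy
        rwa [hutil, hutil] at this
      have hl := max_lip (hX i).2.1 (hsc i) (hT1 x i) (hmem i) (hT2 x i) hmax
      rw [sub_self, abs_zero] at hl
      have h0 : |T x i - x i| ≤ 0 := by
        have hμi := hμ i
        nlinarith [abs_nonneg (T x i - x i)]
      exact sub_eq_zero.mp (abs_eq_zero.mp (le_antisymm h0 (abs_nonneg _)))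
    · rintro ⟨hmem, hfix⟩ i
      refine ⟨hmem i, fun y hy => ?_⟩
      rw [hutil, hutil]
      have := hT2 x i y hy
      rwa [show T x i = x i from congrFun hfix i] at this
  refine ⟨(z : Fin N → ℝ), ?_, ?_⟩
  · refine (hNashIff _).mpr ⟨fun i => z.2 i (Set.mem_univ i), ?_⟩
    exact congrArg Subtype.val hz
  · intro y hy
    obtain ⟨hmem, hfix⟩ := (hNashIff y).mp hy
    set w : ↥SS := ⟨y, fun i _ => hmem i⟩ with hw
    have hwfp : Function.IsFixedPt T' w := Subtype.ext hfix
    have hwit : Function.IsFixedPt (T'^[n]) w := hwfp.iterate n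
    have := hcw.fixedPoint_unique hwit
    exact congrArg Subtype.val this
end

section
/- Suppose each X_i ⊆ ℝ is nonempty, convex, and compact, each h_i is continuously differentiable and μ_i-strongly convex with μ_i > 0, and the variational condition holds: the symmetric matrix D − δ·(G + Gᵀ)/2 is positive definite, where D = diag(μ_1,…,μ_N). Then, for every price vector p, the consumer game admits exactly one Nash equilibrium x*(p). -/
open Matrix

/-- First-order condition at a constrained minimizer of a strongly convex function. -/
lemma aux_foc {f f' : ℝ → ℝ} {κ : ℝ} (hκ : 0 ≤ κ) (hcont : Continuous f')
    (hsc : ∀ x y : ℝ, f x + f' x * (y - x) + κ / 2 * (y - x) ^ 2 ≤ f y)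
    {X : Set ℝ} (hconv : Convex ℝ X) {u : ℝ} (hu : u ∈ X)
    (hmin : ∀ v ∈ X, f u ≤ f v) :
    ∀ v ∈ X, 0 ≤ f' u * (v - u) := by
  intro v hv
  have key : ∀ s : ℝ, s ∈ Set.Ioc (0:ℝ) 1 → 0 ≤ f' (u + s * (v - u)) * (v - u) := by
    intro s hs
    have hm : u + s * (v - u) ∈ X := by
      have h1 : (1 - s) • u + s • v ∈ X :=
        hconv hu hv (by linarith [hs.2]) (le_of_lt hs.1) (by ring)
      have h2 : u + s * (v - u) = (1 - s) • u + s • v := by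
        simp [smul_eq_mul]; ring
      rwa [h2]
    have h3 : 0 ≤ s * (f' (u + s * (v - u)) * (v - u)) := by
      nlinarith [hsc (u + s * (v - u)) u, hmin _ hm, sq_nonneg (s * (v - u))]
    nlinarith [hs.1]
  have hc : ContinuousAt (fun s : ℝ => f' (u + s * (v - u)) * (v - u)) 0 :=
    ((hcont.comp (by continuity)).mul continuous_const).continuousAt
  have ht : Filter.Tendsto (fun s : ℝ => f' (u + s * (v - u)) * (v - u))
      (nhdsWithin 0 (Set.Ioi 0)) (nhds (f' (u + 0 * (v - u)) * (v - u))) :=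
    hc.tendsto.mono_left nhdsWithin_le_nhds
  have hev : ∀ᶠ s in nhdsWithin (0:ℝ) (Set.Ioi 0),
      0 ≤ f' (u + s * (v - u)) * (v - u) :=
    Filter.eventually_of_mem (Ioc_mem_nhdsGT (by norm_num)) key
  have := ge_of_tendsto ht hev
  simpa using this

/-- Quadratic growth at a point satisfying the first-order condition. -/
lemma aux_growth {f f' : ℝ → ℝ} {κ : ℝ}
    (hsc : ∀ x y : ℝ, f x + f' x * (y - x) + κ / 2 * (y - x) ^ 2 ≤ f y)
    {X : Set ℝ} {u : ℝ} (hfoc : ∀ v ∈ X, 0 ≤ f' u * (v - u)) :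
    ∀ v ∈ X, f u + κ / 2 * (v - u) ^ 2 ≤ f v := by
  intro v hv
  nlinarith [hsc u v, hfoc v hv]

/-- The symmetrized quadratic form agrees with the unsymmetrized one. -/
lemma dot_identity {N : ℕ} (μ : Fin N → ℝ) (δ : ℝ) (G : Matrix (Fin N) (Fin N) ℝ)
    (z : Fin N → ℝ) :
    z ⬝ᵥ ((Matrix.diagonal μ - δ • ((2 : ℝ)⁻¹ • (G + Gᵀ))) *ᵥ z)
      = ∑ i, z i * (((Matrix.diagonal μ - δ • G) *ᵥ z) i) := by
  have hswap : ∑ i, z i * ∑ j, G j i * z j = ∑ i, z i * ∑ j, G i j * z j := by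
    simp_rw [Finset.mul_sum]
    rw [Finset.sum_comm]
    exact Finset.sum_congr rfl fun i _ => Finset.sum_congr rfl fun j _ => by ring
  have h1 : ∀ i, ((Matrix.diagonal μ - δ • ((2 : ℝ)⁻¹ • (G + Gᵀ))) *ᵥ z) i
      = μ i * z i - δ * 2⁻¹ * ((∑ j, G i j * z j) + ∑ j, G j i * z j) := by
    intro i
    rw [Matrix.sub_mulVec, Pi.sub_apply, Matrix.smul_mulVec, Pi.smul_apply,
      Matrix.mulVec_diagonal, smul_eq_mul, Matrix.smul_mulVec, Pi.smul_apply,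
      smul_eq_mul, Matrix.add_mulVec, Pi.add_apply]
    have ha : (G *ᵥ z) i = ∑ j, G i j * z j := rfl
    have hb : (Gᵀ *ᵥ z) i = ∑ j, G j i * z j := rfl
    rw [ha, hb]; ring
  have h2 : ∀ i, ((Matrix.diagonal μ - δ • G) *ᵥ z) i = μ i * z i - δ * ∑ j, G i j * z j := by
    intro i
    rw [Matrix.sub_mulVec, Pi.sub_apply, Matrix.smul_mulVec, Pi.smul_apply,
      Matrix.mulVec_diagonal, smul_eq_mul]
    rfl
  rw [dotProduct]
  simp_rw [h1, h2]
  have e1 : ∀ i, z i * (μ i * z i - δ * 2⁻¹ * ((∑ j, G i j * z j) + ∑ j, G j i * z j))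
      = z i * (μ i * z i) - δ * 2⁻¹ * (z i * ∑ j, G i j * z j)
        - δ * 2⁻¹ * (z i * ∑ j, G j i * z j) := fun i => by ring
  have e2 : ∀ i, z i * (μ i * z i - δ * ∑ j, G i j * z j)
      = z i * (μ i * z i) - δ * (z i * ∑ j, G i j * z j) := fun i => by ring
  simp_rw [e1, e2, Finset.sum_sub_distrib, ← Finset.mul_sum, hswap]
  ring

/-- Coordinates of the mulVec of `diagonal μ - δ • G`. -/
lemma mulVec_coord {N : ℕ} (μ : Fin N → ℝ) (δ : ℝ) (G : Matrix (Fin N) (Fin N) ℝ)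
    (z : Fin N → ℝ) (i : Fin N) :
    ((Matrix.diagonal μ - δ • G) *ᵥ z) i = μ i * z i - δ * ∑ j, G i j * z j := by
  rw [Matrix.sub_mulVec, Pi.sub_apply, Matrix.smul_mulVec, Pi.smul_apply,
    Matrix.mulVec_diagonal, smul_eq_mul]
  rfl

/-- Existence and basic properties of the proximal map of `t•h + dist²/2` over `X`. -/
lemma prox_spec {X : Set ℝ} (hne : X.Nonempty) (hconv : Convex ℝ X) (hcpt : IsCompact X)
    {h : ℝ → ℝ} (hC1 : ContDiff ℝ 1 h) {μ : ℝ} (hμ : 0 < μ)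
    (hsc : ∀ x y : ℝ, h x + deriv h x * (y - x) + μ / 2 * (y - x) ^ 2 ≤ h y)
    {t : ℝ} (ht : 0 < t) :
    ∃ P : ℝ → ℝ, (∀ y, P y ∈ X) ∧
      (∀ y v, v ∈ X → 0 ≤ (t * deriv h (P y) + (P y - y)) * (v - P y)) ∧
      (∀ y y', (1 + t * μ) * |P y - P y'| ≤ |y - y'|) := by
  have hcont : Continuous h := (hC1.differentiable one_ne_zero).continuous
  have hcd : Continuous (deriv h) := hC1.continuous_deriv le_rfl
  have hPex : ∀ y : ℝ, ∃ u, u ∈ X ∧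
      ∀ v ∈ X, t * h u + (u - y) ^ 2 / 2 ≤ t * h v + (v - y) ^ 2 / 2 := by
    intro y
    have hφc : Continuous fun u : ℝ => t * h u + (u - y) ^ 2 / 2 :=
      (continuous_const.mul hcont).add
        (((continuous_id.sub continuous_const).pow 2).div_const 2)
    obtain ⟨u, hu, hmin⟩ := hcpt.exists_isMinOn hne hφc.continuousOn
    exact ⟨u, hu, fun v hv => isMinOn_iff.mp hmin v hv⟩
  choose P hPmem hPmin using hPex
  have hκ : (0:ℝ) ≤ 1 + t * μ := by nlinarith
  have hscφ : ∀ (y x0 y0 : ℝ),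
      (t * h x0 + (x0 - y) ^ 2 / 2) + (t * deriv h x0 + (x0 - y)) * (y0 - x0)
        + (1 + t * μ) / 2 * (y0 - x0) ^ 2 ≤ t * h y0 + (y0 - y) ^ 2 / 2 := by
    intro y x0 y0
    have h1 := mul_le_mul_of_nonneg_left (hsc x0 y0) (le_of_lt ht)
    nlinarith [h1]
  have hfoc : ∀ y v, v ∈ X → 0 ≤ (t * deriv h (P y) + (P y - y)) * (v - P y) := by
    intro y
    exact aux_foc (f := fun u => t * h u + (u - y) ^ 2 / 2)
      (f' := fun u => t * deriv h u + (u - y)) hκ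
      ((continuous_const.mul hcd).add (continuous_id.sub continuous_const))
      (hscφ y) hconv (hPmem y) (hPmin y)
  refine ⟨P, hPmem, hfoc, ?_⟩
  intro y y'
  rcases eq_or_ne (P y) (P y') with he | he
  · rw [he]; simp [abs_nonneg]
  · have g1 := aux_growth (f := fun u => t * h u + (u - y) ^ 2 / 2)
      (f' := fun u => t * deriv h u + (u - y)) (hscφ y) (hfoc y) (P y') (hPmem y')
    have g2 := aux_growth (f := fun u => t * h u + (u - y') ^ 2 / 2)
      (f' := fun u => t * deriv h u + (u - y')) (hscφ y') (hfoc y') (P y) (hPmem y)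
    have hq : (1 + t * μ) * (P y - P y') ^ 2 ≤ (P y - P y') * (y - y') := by
      nlinarith [g1, g2]
    have habs : (P y - P y') * (y - y') ≤ |P y - P y'| * |y - y'| := by
      rw [← abs_mul]; exact le_abs_self _
    have he2 : |P y - P y'| * |P y - P y'| = (P y - P y') ^ 2 := by
      rw [abs_mul_abs_self, sq]
    have hpos : 0 < |P y - P y'| := abs_pos.mpr (sub_ne_zero.mpr he)
    have hmain : ((1 + t * μ) * |P y - P y'|) * |P y - P y'| ≤ |y - y'| * |P y - P y'| := by
      rw [mul_assoc, he2]
      nlinarith [hq, habs]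
    exact le_of_mul_le_mul_right hmain hpos

set_option maxHeartbeats 1000000 in
lemma contraction_key {N : ℕ} (hN : N ≠ 0) (M : Matrix (Fin N) (Fin N) ℝ)
    (μ : Fin N → ℝ) (hμ : ∀ i, 0 < μ i)
    (hq : ∀ z : Fin N → ℝ, z ≠ 0 → 0 < ∑ i, z i * (M *ᵥ z) i) :
    ∃ t ρ : ℝ, 0 < t ∧ 0 ≤ ρ ∧ ρ < 1 ∧ ∀ z w : Fin N → ℝ,
      (∀ i, (1 + t * μ i) * |w i| ≤ |(1 + t * μ i) * z i - t * (M *ᵥ z) i|) →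
      Real.sqrt (∑ i, (w i) ^ 2) ≤ ρ * Real.sqrt (∑ i, (z i) ^ 2) := by
  classical
  haveI : Nonempty (Fin N) := ⟨⟨0, Nat.pos_of_ne_zero hN⟩⟩
  set n2 : (Fin N → ℝ) → ℝ := fun v => ∑ i, (v i) ^ 2 with hn2def
  have hn2_nonneg : ∀ v, 0 ≤ n2 v := fun v => Finset.sum_nonneg fun i _ => sq_nonneg _
  set Q : (Fin N → ℝ) → ℝ := fun z => ∑ i, z i * (M *ᵥ z) i with hQ
  set eL := WithLp.linearEquiv 2 ℝ (Fin N → ℝ) with heL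
  have heLs_apply : ∀ (v : Fin N → ℝ) (i : Fin N), (eL.symm v : EuclideanSpace ℝ (Fin N)) i = v i :=
    fun _ _ => rfl
  have hnorm : ∀ v : Fin N → ℝ, ‖(eL.symm v : EuclideanSpace ℝ (Fin N))‖ = Real.sqrt (n2 v) := by
    intro v
    rw [EuclideanSpace.norm_eq]
    congr 1
    exact Finset.sum_congr rfl fun i _ => by rw [heLs_apply, Real.norm_eq_abs, sq_abs]
  -- an operator-norm type constant
  obtain ⟨K, hK1, hKv2⟩ : ∃ K : ℝ, 1 ≤ K ∧ ∀ v : Fin N → ℝ, n2 (M *ᵥ v) ≤ K ^ 2 * n2 v := by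
    set A : EuclideanSpace ℝ (Fin N) →L[ℝ] EuclideanSpace ℝ (Fin N) :=
      LinearMap.toContinuousLinearMap (Matrix.toEuclideanLin M) with hA
    have hAv : ∀ v : Fin N → ℝ, A (eL.symm v) = eL.symm (M *ᵥ v) := fun v => rfl
    refine ⟨‖A‖ + 1, by have := norm_nonneg A; linarith, ?_⟩
    intro v
    have h1 : ‖A (eL.symm v)‖ ≤ ‖A‖ * ‖(eL.symm v : EuclideanSpace ℝ (Fin N))‖ := A.le_opNorm _
    rw [hAv, hnorm, hnorm] at h1
    have h2 : ‖A‖ * Real.sqrt (n2 v) ≤ (‖A‖ + 1) * Real.sqrt (n2 v) :=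
      mul_le_mul_of_nonneg_right (by linarith) (Real.sqrt_nonneg _)
    have h3 : Real.sqrt (n2 (M *ᵥ v)) ≤ (‖A‖ + 1) * Real.sqrt (n2 v) := by linarith
    nlinarith [Real.sq_sqrt (hn2_nonneg (M *ᵥ v)), Real.sq_sqrt (hn2_nonneg v),
      Real.sqrt_nonneg (n2 (M *ᵥ v)), Real.sqrt_nonneg (n2 v), norm_nonneg A]
  have hK0 : 0 ≤ K := by linarith
  -- minimum of the quadratic form on the unit sphere
  obtain ⟨α, hα_pos, hα_le, hαK⟩ : ∃ α : ℝ, 0 < α ∧ (∀ z : Fin N → ℝ, α * n2 z ≤ Q z) ∧ α ≤ K := by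
    have hQc : Continuous fun x : EuclideanSpace ℝ (Fin N) => Q (eL x) := by
      have h1 : Continuous fun x : EuclideanSpace ℝ (Fin N) => eL x :=
        PiLp.continuous_ofLp (p := 2) (β := fun _ : Fin N => ℝ)
      have hMcont : ∀ i, Continuous fun x : EuclideanSpace ℝ (Fin N) => (M *ᵥ eL x) i := by
        intro i
        have he : (fun x : EuclideanSpace ℝ (Fin N) => (M *ᵥ eL x) i)
            = fun x => ∑ j, M i j * eL x j := rfl
        rw [he]
        exact continuous_finset_sum _ fun j _ =>
          continuous_const.mul ((continuous_apply j).comp h1)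
      simp only [hQ]
      exact continuous_finset_sum _ fun i _ => ((continuous_apply i).comp h1).mul (hMcont i)
    have hsph : IsCompact (Metric.sphere (0 : EuclideanSpace ℝ (Fin N)) 1) :=
      isCompact_sphere _ _
    have hsph_ne : (Metric.sphere (0 : EuclideanSpace ℝ (Fin N)) 1).Nonempty := by
      refine ⟨EuclideanSpace.single (Classical.arbitrary (Fin N)) 1, ?_⟩
      simp [EuclideanSpace.norm_single]
    obtain ⟨u0, hu0mem, hu0min⟩ := hsph.exists_isMinOn hsph_ne hQc.continuousOn
    have hu0norm : ‖u0‖ = 1 := by simpa using mem_sphere_zero_iff_norm.mp hu0mem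
    have hu0n2 : n2 (eL u0) = 1 := by
      have h5 : ‖(eL.symm (eL u0) : EuclideanSpace ℝ (Fin N))‖ = Real.sqrt (n2 (eL u0)) := hnorm _
      rw [LinearEquiv.symm_apply_apply, hu0norm] at h5
      nlinarith [hn2_nonneg (eL u0), Real.sq_sqrt (hn2_nonneg (eL u0))]
    have hα_pos : 0 < Q (eL u0) := by
      apply hq
      intro hcon
      have h6 : u0 = 0 := by
        have := congrArg (fun v => (eL.symm v : EuclideanSpace ℝ (Fin N))) hcon
        simpa using this
      rw [h6] at hu0norm; simp at hu0norm
    have hQhom : ∀ (c : ℝ) (z : Fin N → ℝ), Q (c • z) = c ^ 2 * Q z := by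
      intro c z
      simp only [hQ, Matrix.mulVec_smul, Pi.smul_apply, smul_eq_mul, Finset.mul_sum]
      exact Finset.sum_congr rfl fun i _ => by ring
    refine ⟨Q (eL u0), hα_pos, ?_, ?_⟩
    · intro z
      rcases eq_or_ne z 0 with rfl | hz
      · simp [hQ, hn2def]
      · have hn2pos : 0 < n2 z := by
          rcases Function.ne_iff.mp hz with ⟨j, hj⟩
          exact Finset.sum_pos' (fun i _ => sq_nonneg _)
            ⟨j, Finset.mem_univ j, by nlinarith [abs_pos.mpr hj, sq_abs (z j)]⟩
        have hrpos : 0 < Real.sqrt (n2 z) := Real.sqrt_pos.mpr hn2pos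
        have hrsq : Real.sqrt (n2 z) ^ 2 = n2 z := Real.sq_sqrt (le_of_lt hn2pos)
        have humem : (eL.symm ((Real.sqrt (n2 z))⁻¹ • z) : EuclideanSpace ℝ (Fin N)) ∈
            Metric.sphere (0 : EuclideanSpace ℝ (Fin N)) 1 := by
          rw [mem_sphere_zero_iff_norm, hnorm]
          have h7 : n2 ((Real.sqrt (n2 z))⁻¹ • z) = ((Real.sqrt (n2 z))⁻¹) ^ 2 * n2 z := by
            simp only [hn2def, Pi.smul_apply, smul_eq_mul, Finset.mul_sum]
            exact Finset.sum_congr rfl fun i _ => by ring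
          have h11 : ((Real.sqrt (n2 z))⁻¹) ^ 2 * n2 z = 1 := by
            rw [inv_pow, inv_mul_eq_one₀ (by positivity)]
            exact hrsq
          rw [h7, h11]
          exact Real.sqrt_one
        have h8 : Q (eL u0) ≤ Q (eL (eL.symm ((Real.sqrt (n2 z))⁻¹ • z))) := hu0min humem
        rw [LinearEquiv.apply_symm_apply, hQhom] at h8
        have h11 : ((Real.sqrt (n2 z))⁻¹) ^ 2 * n2 z = 1 := by
          rw [inv_pow, inv_mul_eq_one₀ (by positivity)]
          exact hrsq
        calc Q (eL u0) * n2 z ≤ (((Real.sqrt (n2 z))⁻¹) ^ 2 * Q z) * n2 z := by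
              nlinarith [hn2pos]
          _ = (((Real.sqrt (n2 z))⁻¹) ^ 2 * n2 z) * Q z := by ring
          _ = Q z := by rw [h11, one_mul]
    · -- α ≤ K
      have h1 : (Q (eL u0)) ^ 2 ≤ n2 (eL u0) * n2 (M *ᵥ eL u0) := by
        have h10 := Finset.sum_mul_sq_le_sq_mul_sq Finset.univ (fun i => eL u0 i)
          (fun i => (M *ᵥ eL u0) i)
        simpa [hQ, hn2def] using h10
      have h2 := hKv2 (eL u0)
      rw [hu0n2] at h1 h2
      nlinarith [hα_pos, hK1, h1, h2]
  -- maximum of μ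
  obtain ⟨μmax, hμmax_le, hμmax_pos⟩ : ∃ m : ℝ, (∀ i, μ i ≤ m) ∧ 0 < m :=
    ⟨Finset.univ.sup' Finset.univ_nonempty μ,
      fun i => Finset.le_sup' μ (Finset.mem_univ i),
      lt_of_lt_of_le (hμ (Classical.arbitrary (Fin N)))
        (Finset.le_sup' μ (Finset.mem_univ _))⟩
  -- choice of the step size
  obtain ⟨t, ht, htkey, htα1⟩ : ∃ t : ℝ, 0 < t ∧
      t * (2 * μmax * K + K ^ 2) = α - t * α ∧ t * α < 1 := by
    have hβpos : 0 < 2 * μmax * K + K ^ 2 + α := by nlinarith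
    refine ⟨α / (2 * μmax * K + K ^ 2 + α), div_pos hα_pos hβpos, ?_, ?_⟩
    · field_simp
      ring
    · rw [div_mul_eq_mul_div, div_lt_one hβpos]
      nlinarith
  have hρ2 : 0 ≤ 1 - t * α := by linarith
  refine ⟨t, Real.sqrt (1 - t * α), ht, Real.sqrt_nonneg _, ?_, ?_⟩
  · nlinarith [Real.sq_sqrt hρ2, Real.sqrt_nonneg (1 - t * α), hα_pos, ht]
  intro z w hw
  set v : Fin N → ℝ := M *ᵥ z with hv
  have hdenpos : ∀ i, 0 < 1 + t * μ i := fun i => by nlinarith [hμ i]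
  -- coordinatewise bound
  have hwi : ∀ i, (w i) ^ 2 ≤ (z i - t / (1 + t * μ i) * v i) ^ 2 := by
    intro i
    have h2 : (1 + t * μ i) * |z i - t / (1 + t * μ i) * v i|
        = |(1 + t * μ i) * z i - t * v i| := by
      rw [show (1 + t * μ i) * z i - t * v i
          = (1 + t * μ i) * (z i - t / (1 + t * μ i) * v i) by
            field_simp [ne_of_gt (hdenpos i)], abs_mul, abs_of_pos (hdenpos i)]
    have h3 : (1 + t * μ i) * |w i| ≤ (1 + t * μ i) * |z i - t / (1 + t * μ i) * v i| := by
      rw [h2]; exact hw i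
    have h4 : |w i| ≤ |z i - t / (1 + t * μ i) * v i| := le_of_mul_le_mul_left h3 (hdenpos i)
    calc (w i) ^ 2 = |w i| ^ 2 := (sq_abs _).symm
      _ ≤ |z i - t / (1 + t * μ i) * v i| ^ 2 := by
          exact pow_le_pow_left₀ (abs_nonneg _) h4 2
      _ = (z i - t / (1 + t * μ i) * v i) ^ 2 := sq_abs _
  set s : Fin N → ℝ := fun i => t / (1 + t * μ i) with hs
  have hs0 : ∀ i, 0 ≤ s i := fun i => le_of_lt (div_pos ht (hdenpos i))
  have hst : ∀ i, s i ≤ t := fun i =>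
    div_le_self (le_of_lt ht) (by nlinarith [hμ i])
  have hts : ∀ i, t - s i ≤ t ^ 2 * μmax := by
    intro i
    have h1 : t - s i = t ^ 2 * μ i / (1 + t * μ i) := by
      rw [hs]
      field_simp [ne_of_gt (hdenpos i)]
      ring
    rw [h1]
    calc t ^ 2 * μ i / (1 + t * μ i) ≤ t ^ 2 * μ i :=
          div_le_self (by nlinarith [hμ i, sq_nonneg t]) (by nlinarith [hμ i])
      _ ≤ t ^ 2 * μmax := by nlinarith [hμmax_le i, sq_nonneg t]
  -- Cauchy-Schwarz for |z|·|v|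
  have hcs : ∑ i, |z i| * |v i| ≤ K * n2 z := by
    have h1 : (∑ i, |z i| * |v i|) ^ 2 ≤ (∑ i, |z i| ^ 2) * ∑ i, |v i| ^ 2 :=
      Finset.sum_mul_sq_le_sq_mul_sq Finset.univ _ _
    simp only [sq_abs] at h1
    have h2 : (∑ i, (v i) ^ 2) ≤ K ^ 2 * n2 z := hKv2 z
    have h3 : 0 ≤ ∑ i, |z i| * |v i| :=
      Finset.sum_nonneg fun i _ => mul_nonneg (abs_nonneg _) (abs_nonneg _)
    nlinarith [hn2_nonneg z, mul_nonneg hK0 (hn2_nonneg z)]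
  have hQz : t * α * n2 z ≤ t * Q z := by
    have h1 := hα_le z
    nlinarith [ht]
  -- main sum bound
  have key : n2 w ≤ (1 - t * α) * n2 z := by
    have h4 : n2 w ≤ ∑ i, (z i - s i * v i) ^ 2 :=
      Finset.sum_le_sum fun i _ => hwi i
    have hexp : ∑ i, (z i - s i * v i) ^ 2
        = n2 z - 2 * ∑ i, s i * (z i * v i) + ∑ i, (s i) ^ 2 * (v i) ^ 2 := by
      have e : ∀ i, (z i - s i * v i) ^ 2
          = (z i) ^ 2 - 2 * (s i * (z i * v i)) + (s i) ^ 2 * (v i) ^ 2 := fun i => by ring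
      simp_rw [e, Finset.sum_add_distrib, Finset.sum_sub_distrib, ← Finset.mul_sum]
      rfl
    have hcross : t * Q z - t ^ 2 * μmax * (K * n2 z) ≤ ∑ i, s i * (z i * v i) := by
      have e1 : ∑ i, s i * (z i * v i) = t * Q z - ∑ i, (t - s i) * (z i * v i) := by
        rw [hQ, Finset.mul_sum, ← Finset.sum_sub_distrib]
        exact Finset.sum_congr rfl fun i _ => by ring
      rw [e1]
      have h5 : ∑ i, (t - s i) * (z i * v i) ≤ t ^ 2 * μmax * (K * n2 z) := by
        calc ∑ i, (t - s i) * (z i * v i) ≤ ∑ i, t ^ 2 * μmax * (|z i| * |v i|) := by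
              apply Finset.sum_le_sum
              intro i _
              have h6 : (t - s i) * (z i * v i) ≤ (t - s i) * |z i * v i| := by
                have h7 := le_abs_self (z i * v i)
                have h7' : 0 ≤ t - s i := by linarith [hst i]
                nlinarith
              have h8 : (t - s i) * |z i * v i| ≤ t ^ 2 * μmax * |z i * v i| := by
                have := hts i
                nlinarith [abs_nonneg (z i * v i)]
              rw [abs_mul] at h8 h6
              linarith
          _ = t ^ 2 * μmax * ∑ i, |z i| * |v i| := by rw [← Finset.mul_sum]
          _ ≤ t ^ 2 * μmax * (K * n2 z) := by
              apply mul_le_mul_of_nonneg_left hcs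
              nlinarith [sq_nonneg t, hμmax_pos, ht]
      linarith
    have hsq : ∑ i, (s i) ^ 2 * (v i) ^ 2 ≤ t ^ 2 * (K ^ 2 * n2 z) := by
      calc ∑ i, (s i) ^ 2 * (v i) ^ 2 ≤ ∑ i, t ^ 2 * (v i) ^ 2 := by
            apply Finset.sum_le_sum
            intro i _
            have h9 : (s i) ^ 2 ≤ t ^ 2 := by nlinarith [hs0 i, hst i]
            nlinarith [sq_nonneg (v i), h9]
        _ = t ^ 2 * ∑ i, (v i) ^ 2 := by rw [← Finset.mul_sum]
        _ ≤ t ^ 2 * (K ^ 2 * n2 z) := mul_le_mul_of_nonneg_left (hKv2 z) (sq_nonneg t)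
    have hcomb : n2 w ≤ n2 z - 2 * (t * α * n2 z)
        + 2 * (t ^ 2 * μmax * (K * n2 z)) + t ^ 2 * (K ^ 2 * n2 z) := by
      rw [hexp] at h4
      nlinarith [hcross, hsq, hQz]
    have e4 : 2 * (t ^ 2 * μmax * (K * n2 z)) + t ^ 2 * (K ^ 2 * n2 z)
        = (t * (2 * μmax * K + K ^ 2)) * (t * n2 z) := by ring
    rw [htkey] at e4
    have e5 : 0 ≤ t ^ 2 * α * n2 z :=
      mul_nonneg (mul_nonneg (sq_nonneg t) (le_of_lt hα_pos)) (hn2_nonneg z)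
    nlinarith [hcomb, e4, e5]
  calc Real.sqrt (n2 w) ≤ Real.sqrt ((1 - t * α) * n2 z) := Real.sqrt_le_sqrt key
    _ = Real.sqrt (1 - t * α) * Real.sqrt (n2 z) := Real.sqrt_mul hρ2 _

set_option maxHeartbeats 1000000 in
/-- Uniqueness of the Nash equilibrium under the variational condition:
`D − δ (G + Gᵀ)/2` is positive definite, with `D = diag(μ)`. -/
theorem unique_nash_equilibrium_variational {N : ℕ}
    (X : Fin N → Set ℝ)
    (hX : ∀ i, (X i).Nonempty ∧ Convex ℝ (X i) ∧ IsCompact (X i))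
    (a b : Fin N → ℝ) (δ : ℝ) (hδ : 0 ≤ δ)
    (G : Matrix (Fin N) (Fin N) ℝ) (hGdiag : ∀ i, G i i = 0)
    (h : Fin N → ℝ → ℝ) (hC1 : ∀ i, ContDiff ℝ 1 (h i))
    (μ : Fin N → ℝ) (hμ : ∀ i, 0 < μ i)
    (hsc : ∀ i, ∀ x y : ℝ,
      h i y ≥ h i x + deriv (h i) x * (y - x) + μ i / 2 * (y - x) ^ 2)
    (hvar : ∀ z : Fin N → ℝ, z ≠ 0 →
      0 < z ⬝ᵥ ((Matrix.diagonal μ - δ • ((2 : ℝ)⁻¹ • (G + Gᵀ))) *ᵥ z)) :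
    ∀ p : Fin N → ℝ, ∃! x : Fin N → ℝ, IsNashEq X a b δ G h p x := by
  intro p
  classical
  -- the effective linear coefficient in player i's utility
  set S : (Fin N → ℝ) → Fin N → ℝ :=
    fun x i => a i - b i * p i + δ * ∑ j, G i j * x j with hS
  have hutil : ∀ (x : Fin N → ℝ) (i : Fin N) (y : ℝ),
      utility a b δ G h p x i y = S x i * y - h i y := by
    intro x i y
    have hsum : ∑ j, G i j * Function.update x i y j = ∑ j, G i j * x j := by
      refine Finset.sum_congr rfl fun j _ => ?_
      rcases eq_or_ne j i with rfl | hj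
      · simp [hGdiag j]
      · rw [Function.update_of_ne hj]
    rw [utility, hsum]
  clear_value S
  have hcd : ∀ i, Continuous (deriv (h i)) := fun i => (hC1 i).continuous_deriv le_rfl
  -- characterization of Nash equilibria through first-order conditions
  have hNash_iff : ∀ x : Fin N → ℝ, IsNashEq X a b δ G h p x ↔
      ∀ i, x i ∈ X i ∧ ∀ v ∈ X i, 0 ≤ (deriv (h i) (x i) - S x i) * (v - x i) := by
    intro x
    constructor
    · intro hn i
      obtain ⟨hxi, hmax⟩ := hn i
      refine ⟨hxi, ?_⟩
      exact aux_foc (f := fun u => h i u - S x i * u)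
        (f' := fun u => deriv (h i) u - S x i) (le_of_lt (hμ i))
        ((hcd i).sub continuous_const)
        (fun x0 y0 => by nlinarith [hsc i x0 y0]) (hX i).2.1 hxi
        (fun v hv => by
          have h2 := hmax v hv
          rw [hutil, hutil] at h2
          show h i (x i) - S x i * x i ≤ h i v - S x i * v
          linarith)
    · intro hfoc i
      obtain ⟨hxi, hf⟩ := hfoc i
      refine ⟨hxi, fun v hv => ?_⟩
      rw [hutil, hutil]
      have h3 : h i (x i) - S x i * x i + μ i / 2 * (v - x i) ^ 2
          ≤ h i v - S x i * v := aux_growth (f := fun u => h i u - S x i * u)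
        (f' := fun u => deriv (h i) u - S x i) (κ := μ i)
        (fun x0 y0 => by nlinarith [hsc i x0 y0]) hf v hv
      nlinarith [mul_nonneg (le_of_lt (hμ i)) (sq_nonneg (v - x i))]
  -- difference of the linear coefficients
  have hSdiff : ∀ (u w : Fin N → ℝ) (i : Fin N),
      S u i - S w i = δ * ∑ j, G i j * (u j - w j) := by
    intro u w i
    rw [hS]
    simp only
    rw [show (∑ j, G i j * (u j - w j)) = (∑ j, G i j * u j) - ∑ j, G i j * w j by
      rw [← Finset.sum_sub_distrib]; exact Finset.sum_congr rfl fun j _ => by ring]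
    ring
  -- positivity of the quadratic form
  set M : Matrix (Fin N) (Fin N) ℝ := Matrix.diagonal μ - δ • G with hM
  have hq_pos : ∀ z : Fin N → ℝ, z ≠ 0 → 0 < ∑ i, z i * (M *ᵥ z) i := by
    intro z hz
    have := hvar z hz
    rwa [dot_identity] at this
  -- uniqueness of equilibria
  have huniq : ∀ x₁ x₂ : Fin N → ℝ, IsNashEq X a b δ G h p x₁ →
      IsNashEq X a b δ G h p x₂ → x₁ = x₂ := by
    intro x₁ x₂ hn₁ hn₂
    by_contra hne
    have hz : (fun i => x₁ i - x₂ i) ≠ 0 := by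
      intro hcon
      apply hne
      funext i
      have := congrFun hcon i
      simp only [Pi.zero_apply] at this
      linarith
    have hfoc₁ := (hNash_iff x₁).mp hn₁
    have hfoc₂ := (hNash_iff x₂).mp hn₂
    have hper : ∀ i, μ i * (x₁ i - x₂ i) ^ 2 ≤ (S x₁ i - S x₂ i) * (x₁ i - x₂ i) := by
      intro i
      have h1 := (hfoc₁ i).2 (x₂ i) (hfoc₂ i).1
      have h2 := (hfoc₂ i).2 (x₁ i) (hfoc₁ i).1
      nlinarith [hsc i (x₁ i) (x₂ i), hsc i (x₂ i) (x₁ i)]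
    have hsum : ∑ i, μ i * (x₁ i - x₂ i) ^ 2
        ≤ ∑ i, (S x₁ i - S x₂ i) * (x₁ i - x₂ i) :=
      Finset.sum_le_sum fun i _ => hper i
    have hqe : ∑ i, (x₁ i - x₂ i) * (M *ᵥ (fun j => x₁ j - x₂ j)) i
        = ∑ i, μ i * (x₁ i - x₂ i) ^ 2
          - ∑ i, (S x₁ i - S x₂ i) * (x₁ i - x₂ i) := by
      rw [← Finset.sum_sub_distrib]
      refine Finset.sum_congr rfl fun i _ => ?_
      rw [mulVec_coord, hSdiff]
      ring
    have hpos := hq_pos (fun j => x₁ j - x₂ j) hz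
    rw [hqe] at hpos
    linarith
  -- trivial case N = 0
  rcases Nat.eq_zero_or_pos N with hN0 | hNpos
  · subst hN0
    refine ⟨0, fun i => i.elim0, fun y _ => funext fun i => i.elim0⟩
  have hNne : N ≠ 0 := Nat.pos_iff_ne_zero.mp hNpos
  haveI : Nonempty (Fin N) := ⟨⟨0, hNpos⟩⟩
  -- the contraction constants
  obtain ⟨t, ρ, ht, hρ0, hρ1, hcontract⟩ := contraction_key hNne M μ hμ hq_pos
  -- the proximal maps
  have hPex : ∀ i : Fin N, ∃ P : ℝ → ℝ, (∀ y, P y ∈ X i) ∧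
      (∀ y v, v ∈ X i → 0 ≤ (t * deriv (h i) (P y) + (P y - y)) * (v - P y)) ∧
      (∀ y y', (1 + t * μ i) * |P y - P y'| ≤ |y - y'|) :=
    fun i => prox_spec (hX i).1 (hX i).2.1 (hX i).2.2 (hC1 i) (hμ i)
      (fun x y => by nlinarith [hsc i x y]) ht
  choose P hPmem hPfoc hPlip using hPex
  -- the forward-backward map
  set Tf : (Fin N → ℝ) → Fin N → ℝ := fun x i => P i (x i + t * S x i) with hTf
  set eE := WithLp.equiv 2 (Fin N → ℝ) with heE
  set TE : EuclideanSpace ℝ (Fin N) → EuclideanSpace ℝ (Fin N) :=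
    fun x => eE.symm (Tf (eE x)) with hTE
  -- the contraction estimate for TE
  have hTlip : ∀ x y : EuclideanSpace ℝ (Fin N), dist (TE x) (TE y) ≤ ρ * dist x y := by
    intro x y
    have hzdiff : ∀ (u w : Fin N → ℝ) (i : Fin N),
        (u i + t * S u i) - (w i + t * S w i)
          = (1 + t * μ i) * (u i - w i) - t * ((M *ᵥ (fun j => u j - w j)) i) := by
      intro u w i
      rw [mulVec_coord]
      linear_combination t * hSdiff u w i
    have hkey : ∀ i : Fin N, (1 + t * μ i) * |Tf (eE x) i - Tf (eE y) i|
        ≤ |(1 + t * μ i) * (eE x i - eE y i)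
            - t * ((M *ᵥ (fun j => eE x j - eE y j)) i)| := by
      intro i
      have h1 := hPlip i (eE x i + t * S (eE x) i) (eE y i + t * S (eE y) i)
      rw [hzdiff (eE x) (eE y) i] at h1
      exact h1
    have h2 := hcontract (fun j => eE x j - eE y j) (fun i => Tf (eE x) i - Tf (eE y) i) hkey
    have hde : ∀ u w : EuclideanSpace ℝ (Fin N),
        dist u w = Real.sqrt (∑ i, (eE u i - eE w i) ^ 2) := by
      intro u w
      rw [EuclideanSpace.dist_eq]
      congr 1
      exact Finset.sum_congr rfl fun i _ => by
        rw [Real.dist_eq]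
        rw [sq_abs]
        rfl
    rw [hde, hde]
    have he1 : ∀ i, eE (TE x) i - eE (TE y) i = Tf (eE x) i - Tf (eE y) i := fun i => rfl
    simp_rw [he1]
    exact h2
  -- Banach fixed point
  haveI : Nonempty (EuclideanSpace ℝ (Fin N)) := ⟨0⟩
  have hCW : ContractingWith ⟨ρ, hρ0⟩ TE := by
    constructor
    · exact_mod_cast hρ1
    · exact LipschitzWith.of_dist_le_mul hTlip
  set x0 : EuclideanSpace ℝ (Fin N) := ContractingWith.fixedPoint TE hCW with hx0
  have hfixE : TE x0 = x0 := ContractingWith.fixedPoint_isFixedPt hCW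
  set xs : Fin N → ℝ := eE x0 with hxs
  have hfix : Tf xs = xs := by
    have h1 := congrArg eE hfixE
    rwa [hTE, Equiv.apply_symm_apply] at h1
  have hcoord : ∀ i, P i (xs i + t * S xs i) = xs i := fun i => congrFun hfix i
  -- xs is a Nash equilibrium
  have hnash : IsNashEq X a b δ G h p xs := by
    rw [hNash_iff]
    intro i
    constructor
    · rw [← hcoord i]; exact hPmem i _
    · intro v hv
      have h1 := hPfoc i (xs i + t * S xs i) v hv
      rw [hcoord i] at h1
      have h2 : (t * deriv (h i) (xs i) + (xs i - (xs i + t * S xs i))) * (v - xs i)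
          = t * ((deriv (h i) (xs i) - S xs i) * (v - xs i)) := by ring
      rw [h2] at h1
      nlinarith [ht]
  exact ⟨xs, hnash, fun y hy => huniq y xs hy hnash⟩
end

section
/- Let G be an N×N real matrix that is symmetric with nonnegative entries, and let D = diag(μ_1,…,μ_N) with μ_i > 0 for all i, and δ ≥ 0. Then the contraction condition ρ(δ·D^{-1}·|G|) < 1 and the variational condition that D − δ·(G + Gᵀ)/2 is positive definite are equivalent, and both are equivalent to δ·ρ(D^{-1}G) < 1. -/
open Matrix

namespace SpecRadAux

variable {N : ℕ}

lemma mem_spectrum_iff_det (M : Matrix (Fin N) (Fin N) ℂ) (z : ℂ) :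
    z ∈ spectrum ℂ M ↔ (z • (1 : Matrix (Fin N) (Fin N) ℂ) - M).det = 0 := by
  rw [spectrum.mem_iff, Algebra.algebraMap_eq_smul_one, Matrix.isUnit_iff_isUnit_det,
    isUnit_iff_ne_zero, not_not]

lemma mem_spectrum_iff_exists (M : Matrix (Fin N) (Fin N) ℂ) (z : ℂ) :
    z ∈ spectrum ℂ M ↔ ∃ v, v ≠ 0 ∧ M *ᵥ v = z • v := by
  rw [mem_spectrum_iff_det, ← Matrix.exists_mulVec_eq_zero_iff]
  constructor
  · rintro ⟨v, hv, h⟩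
    refine ⟨v, hv, ?_⟩
    rw [sub_mulVec, smul_mulVec, one_mulVec, sub_eq_zero] at h
    exact h.symm
  · rintro ⟨v, hv, h⟩
    refine ⟨v, hv, ?_⟩
    rw [sub_mulVec, smul_mulVec, one_mulVec, h, sub_self]

lemma real_smul_one_sub_map (M : Matrix (Fin N) (Fin N) ℝ) (r : ℝ) :
    (r : ℂ) • (1 : Matrix (Fin N) (Fin N) ℂ) - M.map (algebraMap ℝ ℂ)
      = (r • (1 : Matrix (Fin N) (Fin N) ℝ) - M).map (algebraMap ℝ ℂ) := by
  ext i j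
  by_cases h : i = j <;>
    simp [Matrix.map_apply, Matrix.one_apply, h, Complex.ofReal_sub]

lemma real_mem_spectrum_iff (M : Matrix (Fin N) (Fin N) ℝ) (r : ℝ) :
    (r : ℂ) ∈ spectrum ℂ (M.map (algebraMap ℝ ℂ)) ↔
      ∃ v : Fin N → ℝ, v ≠ 0 ∧ M *ᵥ v = r • v := by
  rw [mem_spectrum_iff_det, real_smul_one_sub_map]
  have hdet : ((r • (1:Matrix (Fin N) (Fin N) ℝ) - M).map (algebraMap ℝ ℂ)).det
      = algebraMap ℝ ℂ ((r • (1:Matrix (Fin N) (Fin N) ℝ) - M).det) := by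
    rw [← RingHom.mapMatrix_apply, ← RingHom.map_det]
  have h0 : ((r • (1:Matrix (Fin N) (Fin N) ℝ) - M).map (algebraMap ℝ ℂ)).det = 0 ↔
      ((r • (1:Matrix (Fin N) (Fin N) ℝ) - M).det = 0) := by
    rw [hdet]; simp
  rw [h0, ← Matrix.exists_mulVec_eq_zero_iff]
  constructor
  · rintro ⟨v, hv, h⟩
    refine ⟨v, hv, ?_⟩
    rw [sub_mulVec, smul_mulVec, one_mulVec, sub_eq_zero] at h
    exact h.symm
  · rintro ⟨v, hv, h⟩
    refine ⟨v, hv, ?_⟩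
    rw [sub_mulVec, smul_mulVec, one_mulVec, h, sub_self]

/-- The set of absolute values of complex eigenvalues. -/
def spAbs (M : Matrix (Fin N) (Fin N) ℝ) : Set ℝ :=
  {r : ℝ | ∃ z : ℂ, z ∈ spectrum ℂ (M.map (algebraMap ℝ ℂ)) ∧ r = ‖z‖}

lemma specRad_eq (M : Matrix (Fin N) (Fin N) ℝ) : specRad M = sSup (spAbs M) := rfl

lemma spAbs_finite (M : Matrix (Fin N) (Fin N) ℝ) : (spAbs M).Finite := by
  have h : spAbs M = (fun z : ℂ => ‖z‖) '' (spectrum ℂ (M.map (algebraMap ℝ ℂ))) := by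
    ext r; simp [spAbs, Set.mem_image, eq_comm]
  rw [h]
  exact (Matrix.finite_spectrum _).image _

lemma spAbs_nonneg (M : Matrix (Fin N) (Fin N) ℝ) {r : ℝ} (hr : r ∈ spAbs M) : 0 ≤ r := by
  obtain ⟨z, _, rfl⟩ := hr; exact norm_nonneg z

lemma specRad_lt_one_iff (M : Matrix (Fin N) (Fin N) ℝ) :
    specRad M < 1 ↔ ∀ r ∈ spAbs M, r < 1 := by
  rw [specRad_eq]
  rcases Set.eq_empty_or_nonempty (spAbs M) with h | h
  · simp [h, Real.sSup_empty]
  · rw [(spAbs_finite M).csSup_lt_iff h]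

lemma le_specRad (M : Matrix (Fin N) (Fin N) ℝ) {r : ℝ} (hr : r ∈ spAbs M) :
    r ≤ specRad M := le_csSup ((spAbs_finite M).bddAbove) hr

lemma B_apply (G : Matrix (Fin N) (Fin N) ℝ) (μ : Fin N → ℝ) (δ : ℝ) (i j : Fin N) :
    (δ • (Matrix.diagonal fun i => (μ i)⁻¹) * G) i j = δ * ((μ i)⁻¹ * G i j) := by
  rw [Matrix.smul_mul, Matrix.smul_apply, Matrix.diagonal_mul, smul_eq_mul]

lemma conj_quad_eq (G : Matrix (Fin N) (Fin N) ℝ) (hsym : Gᵀ = G) (v : Fin N → ℂ) :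
    (starRingEnd ℂ) (∑ i, ∑ j, (starRingEnd ℂ) (v i) * ((G i j : ℂ) * v j))
      = ∑ i, ∑ j, (starRingEnd ℂ) (v i) * ((G i j : ℂ) * v j) := by
  have hg : ∀ i j, G j i = G i j := fun i j => congrFun (congrFun hsym i) j
  calc (starRingEnd ℂ) (∑ i, ∑ j, (starRingEnd ℂ) (v i) * ((G i j : ℂ) * v j))
      = ∑ i, ∑ j, v i * ((G i j : ℂ) * (starRingEnd ℂ) (v j)) := by
        rw [map_sum]
        refine Finset.sum_congr rfl fun i _ => ?_
        rw [map_sum]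
        refine Finset.sum_congr rfl fun j _ => ?_
        simp only [_root_.map_mul, Complex.conj_conj, Complex.conj_ofReal]
    _ = ∑ j, ∑ i, v i * ((G i j : ℂ) * (starRingEnd ℂ) (v j)) := Finset.sum_comm
    _ = ∑ i, ∑ j, (starRingEnd ℂ) (v i) * ((G i j : ℂ) * v j) := by
        refine Finset.sum_congr rfl fun a _ => Finset.sum_congr rfl fun b _ => ?_
        rw [hg b a]
        ring

lemma spec_B_real (G : Matrix (Fin N) (Fin N) ℝ) (hsym : Gᵀ = G)
    (μ : Fin N → ℝ) (hμ : ∀ i, 0 < μ i) (δ : ℝ) {z : ℂ}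
    (hz : z ∈ spectrum ℂ ((δ • (Matrix.diagonal fun i => (μ i)⁻¹) * G).map (algebraMap ℝ ℂ))) :
    ∃ r : ℝ, z = (r : ℂ) := by
  obtain ⟨v, hv, hMv⟩ := (mem_spectrum_iff_exists _ z).mp hz
  have h1 : ∀ i, (δ : ℂ) * (∑ j, (G i j : ℂ) * v j) = z * ((μ i : ℂ) * v i) := by
    intro i
    have h2 := congrFun hMv i
    simp only [Matrix.mulVec, dotProduct, Matrix.map_apply, Pi.smul_apply,
      smul_eq_mul] at h2
    have h3 : ∑ j, (algebraMap ℝ ℂ) ((δ • (Matrix.diagonal fun i => (μ i)⁻¹) * G) i j) * v j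
        = (δ : ℂ) * (((μ i : ℝ) : ℂ))⁻¹ * ∑ j, (G i j : ℂ) * v j := by
      rw [Finset.mul_sum]
      refine Finset.sum_congr rfl fun j _ => ?_
      rw [B_apply]
      simp only [Complex.coe_algebraMap]
      push_cast
      ring
    rw [h3] at h2
    have hμi : ((μ i : ℝ) : ℂ) ≠ 0 := Complex.ofReal_ne_zero.mpr (hμ i).ne'
    field_simp at h2 ⊢
    linear_combination h2
  set q : ℂ := ∑ i, ∑ j, (starRingEnd ℂ) (v i) * ((G i j : ℂ) * v j) with hqdef
  set nR : ℝ := ∑ i, μ i * Complex.normSq (v i) with hnRdef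
  have key : (δ : ℂ) * q = z * (nR : ℂ) := by
    rw [hqdef, hnRdef]
    push_cast
    rw [Finset.mul_sum, Finset.mul_sum]
    refine Finset.sum_congr rfl fun i _ => ?_
    have : ∑ j, (starRingEnd ℂ) (v i) * ((G i j : ℂ) * v j)
        = (starRingEnd ℂ) (v i) * ∑ j, (G i j : ℂ) * v j := by rw [Finset.mul_sum]
    rw [this]
    have hns : (Complex.normSq (v i) : ℂ) = (starRingEnd ℂ) (v i) * v i := by
      rw [mul_comm, Complex.mul_conj]
    calc (δ : ℂ) * ((starRingEnd ℂ) (v i) * ∑ j, (G i j : ℂ) * v j)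
        = (starRingEnd ℂ) (v i) * ((δ : ℂ) * ∑ j, (G i j : ℂ) * v j) := by ring
      _ = (starRingEnd ℂ) (v i) * (z * ((μ i : ℂ) * v i)) := by rw [h1 i]
      _ = z * ((μ i : ℂ) * ((starRingEnd ℂ) (v i) * v i)) := by ring
      _ = z * ((μ i : ℂ) * (Complex.normSq (v i) : ℂ)) := by rw [hns]
  have hq : (starRingEnd ℂ) q = q := conj_quad_eq G hsym v
  have hnR : 0 < nR := by
    rw [hnRdef]
    have hvi : ∃ i, v i ≠ 0 := Function.ne_iff.mp hv
    obtain ⟨i0, hi0⟩ := hvi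
    refine Finset.sum_pos' (fun i _ => mul_nonneg (hμ i).le (Complex.normSq_nonneg _)) ⟨i0, Finset.mem_univ _, ?_⟩
    exact mul_pos (hμ i0) (Complex.normSq_pos.mpr hi0)
  have hz' : z = (δ : ℂ) * q * ((nR : ℂ))⁻¹ := by
    have hnC : (nR : ℂ) ≠ 0 := Complex.ofReal_ne_zero.mpr hnR.ne'
    field_simp
    linear_combination -key
  have : (starRingEnd ℂ) z = z := by
    rw [hz']
    simp only [_root_.map_mul, map_inv₀, Complex.conj_ofReal, hq]
  exact ⟨z.re, (Complex.conj_eq_iff_re.mp this).symm⟩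

lemma quad_expand (G : Matrix (Fin N) (Fin N) ℝ) (μ : Fin N → ℝ) (δ : ℝ) (x : Fin N → ℝ) :
    x ⬝ᵥ ((Matrix.diagonal μ - δ • G) *ᵥ x)
      = (∑ i, μ i * x i ^ 2) - δ * ∑ i, ∑ j, x i * (G i j * x j) := by
  rw [Matrix.sub_mulVec, dotProduct_sub]
  congr 1
  · simp only [dotProduct, mulVec_diagonal]
    exact Finset.sum_congr rfl fun i _ => by ring
  · rw [smul_mulVec, dotProduct_smul, smul_eq_mul]
    congr 1
    simp only [dotProduct, Matrix.mulVec, Finset.mul_sum]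

lemma abs_eig_lt_one (G : Matrix (Fin N) (Fin N) ℝ) (hsym : Gᵀ = G) (hpos : ∀ i j, 0 ≤ G i j)
    (μ : Fin N → ℝ) (hμ : ∀ i, 0 < μ i) (δ : ℝ) (hδ : 0 ≤ δ)
    (h : ∀ z : Fin N → ℝ, z ≠ 0 → 0 < z ⬝ᵥ ((Matrix.diagonal μ - δ • G) *ᵥ z))
    {r : ℝ} {v : Fin N → ℝ} (hv : v ≠ 0)
    (heig : (δ • (Matrix.diagonal fun i => (μ i)⁻¹) * G) *ᵥ v = r • v) : |r| < 1 := by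
  have h1 : ∀ i, δ * ∑ j, G i j * v j = r * (μ i * v i) := by
    intro i
    have h2 := congrFun heig i
    simp only [Matrix.mulVec, dotProduct, Pi.smul_apply, smul_eq_mul] at h2
    have h3 : ∑ j, (δ • (Matrix.diagonal fun i => (μ i)⁻¹) * G) i j * v j
        = δ * (μ i)⁻¹ * ∑ j, G i j * v j := by
      rw [Finset.mul_sum]
      exact Finset.sum_congr rfl fun j _ => by rw [B_apply]; ring
    rw [h3] at h2
    have hμi : μ i ≠ 0 := (hμ i).ne'
    field_simp at h2 ⊢
    linear_combination h2
  set u : Fin N → ℝ := fun i => |v i| with hu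
  have hu0 : u ≠ 0 := by
    intro h0
    exact hv (funext fun i => abs_eq_zero.mp (congrFun h0 i))
  have hq := h u hu0
  rw [quad_expand] at hq
  set n : ℝ := ∑ i, μ i * v i ^ 2 with hn
  have hnpos : 0 < n := by
    obtain ⟨i0, hi0⟩ := Function.ne_iff.mp hv
    refine Finset.sum_pos' (fun i _ => mul_nonneg (hμ i).le (sq_nonneg _))
      ⟨i0, Finset.mem_univ _, mul_pos (hμ i0) (by nlinarith [sq_nonneg (v i0), sq_abs (v i0), abs_pos.mpr hi0])⟩
  have hun : ∑ i, μ i * u i ^ 2 = n := by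
    rw [hn]
    exact Finset.sum_congr rfl fun i _ => by rw [hu]; simp [sq_abs]
  have key : r * n = δ * ∑ i, ∑ j, v i * (G i j * v j) := by
    rw [hn, Finset.mul_sum, Finset.mul_sum]
    refine Finset.sum_congr rfl fun i _ => ?_
    have : ∑ j, v i * (G i j * v j) = v i * ∑ j, G i j * v j := by rw [Finset.mul_sum]
    rw [this]
    calc r * (μ i * v i ^ 2) = v i * (r * (μ i * v i)) := by ring
      _ = v i * (δ * ∑ j, G i j * v j) := by rw [h1 i]
      _ = δ * (v i * ∑ j, G i j * v j) := by ring
  have habs : |r| * n ≤ δ * ∑ i, ∑ j, u i * (G i j * u j) := by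
    calc |r| * n = |r * n| := by rw [abs_mul, abs_of_pos hnpos]
      _ = |δ * ∑ i, ∑ j, v i * (G i j * v j)| := by rw [key]
      _ = δ * |∑ i, ∑ j, v i * (G i j * v j)| := by rw [abs_mul, abs_of_nonneg hδ]
      _ ≤ δ * ∑ i, ∑ j, u i * (G i j * u j) := by
          refine mul_le_mul_of_nonneg_left ?_ hδ
          calc |∑ i, ∑ j, v i * (G i j * v j)| ≤ ∑ i, |∑ j, v i * (G i j * v j)| :=
                Finset.abs_sum_le_sum_abs _ _
            _ ≤ ∑ i, ∑ j, u i * (G i j * u j) := by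
                refine Finset.sum_le_sum fun i _ => ?_
                calc |∑ j, v i * (G i j * v j)| ≤ ∑ j, |v i * (G i j * v j)| :=
                      Finset.abs_sum_le_sum_abs _ _
                  _ = ∑ j, u i * (G i j * u j) := by
                      refine Finset.sum_congr rfl fun j _ => ?_
                      rw [hu, abs_mul, abs_mul, abs_of_nonneg (hpos i j)]
  have hlt : |r| * n < n := by
    rw [hun] at hq
    linarith
  nlinarith [hlt, hnpos]

lemma S_apply (G : Matrix (Fin N) (Fin N) ℝ) (μ : Fin N → ℝ) (δ : ℝ) (i j : Fin N) :
    (δ • ((Matrix.diagonal fun i => (Real.sqrt (μ i))⁻¹) * G *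
        (Matrix.diagonal fun i => (Real.sqrt (μ i))⁻¹))) i j
      = δ * ((Real.sqrt (μ i))⁻¹ * G i j * (Real.sqrt (μ j))⁻¹) := by
  rw [Matrix.smul_apply, Matrix.mul_diagonal, Matrix.diagonal_mul, smul_eq_mul]

lemma S_herm (G : Matrix (Fin N) (Fin N) ℝ) (hsym : Gᵀ = G) (μ : Fin N → ℝ) (δ : ℝ) :
    (δ • ((Matrix.diagonal fun i => (Real.sqrt (μ i))⁻¹) * G *
        (Matrix.diagonal fun i => (Real.sqrt (μ i))⁻¹))).IsHermitian := by
  have hg : ∀ i j, G j i = G i j := fun i j => congrFun (congrFun hsym i) j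
  show _ = _
  ext i j
  rw [Matrix.conjTranspose_apply, star_trivial, S_apply, S_apply, hg j i]
  ring

lemma S_eig_to_B (G : Matrix (Fin N) (Fin N) ℝ) (μ : Fin N → ℝ) (hμ : ∀ i, 0 < μ i) (δ : ℝ)
    {r : ℝ} {u : Fin N → ℝ} (hu : u ≠ 0)
    (heig : (δ • ((Matrix.diagonal fun i => (Real.sqrt (μ i))⁻¹) * G *
        (Matrix.diagonal fun i => (Real.sqrt (μ i))⁻¹))) *ᵥ u = r • u) :
    ∃ w : Fin N → ℝ, w ≠ 0 ∧
      (δ • (Matrix.diagonal fun i => (μ i)⁻¹) * G) *ᵥ w = r • w := by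
  have hs : ∀ i, 0 < Real.sqrt (μ i) := fun i => Real.sqrt_pos.mpr (hμ i)
  refine ⟨fun i => (Real.sqrt (μ i))⁻¹ * u i, ?_, ?_⟩
  · obtain ⟨i0, hi0⟩ := Function.ne_iff.mp hu
    intro h0
    apply hi0
    have := congrFun h0 i0
    simp only [Pi.zero_apply] at this
    have hne : (Real.sqrt (μ i0))⁻¹ ≠ 0 := inv_ne_zero (hs i0).ne'
    exact (mul_eq_zero.mp this).resolve_left hne
  · funext i
    have hkey : ((δ • (Matrix.diagonal fun i => (μ i)⁻¹) * G) *ᵥ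
        (fun i => (Real.sqrt (μ i))⁻¹ * u i)) i
        = (Real.sqrt (μ i))⁻¹ *
          (((δ • ((Matrix.diagonal fun i => (Real.sqrt (μ i))⁻¹) * G *
            (Matrix.diagonal fun i => (Real.sqrt (μ i))⁻¹))) *ᵥ u) i) := by
      simp only [Matrix.mulVec, dotProduct, Finset.mul_sum]
      refine Finset.sum_congr rfl fun j _ => ?_
      rw [B_apply, S_apply]
      have hmu : (μ i)⁻¹ = (Real.sqrt (μ i))⁻¹ * (Real.sqrt (μ i))⁻¹ := by
        rw [← mul_inv, Real.mul_self_sqrt (hμ i).le]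
      rw [hmu]
      ring
    rw [hkey, heig]
    simp only [Pi.smul_apply, smul_eq_mul]
    ring

lemma quad_transfer (G : Matrix (Fin N) (Fin N) ℝ) (μ : Fin N → ℝ) (hμ : ∀ i, 0 < μ i) (δ : ℝ)
    (z : Fin N → ℝ) :
    (fun i => Real.sqrt (μ i) * z i) ⬝ᵥ
      ((1 - δ • ((Matrix.diagonal fun i => (Real.sqrt (μ i))⁻¹) * G *
        (Matrix.diagonal fun i => (Real.sqrt (μ i))⁻¹))) *ᵥ (fun i => Real.sqrt (μ i) * z i))
      = z ⬝ᵥ ((Matrix.diagonal μ - δ • G) *ᵥ z) := by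
  have hs : ∀ i, 0 < Real.sqrt (μ i) := fun i => Real.sqrt_pos.mpr (hμ i)
  rw [quad_expand]
  rw [Matrix.sub_mulVec, Matrix.one_mulVec, dotProduct_sub]
  congr 1
  · simp only [dotProduct]
    refine Finset.sum_congr rfl fun i _ => ?_
    have : Real.sqrt (μ i) * Real.sqrt (μ i) = μ i := Real.mul_self_sqrt (hμ i).le
    nlinarith [this]
  · simp only [dotProduct, Matrix.mulVec, Finset.mul_sum]
    refine Finset.sum_congr rfl fun i _ => ?_
    refine Finset.sum_congr rfl fun j _ => ?_
    rw [S_apply]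
    have hi : Real.sqrt (μ i) * (Real.sqrt (μ i))⁻¹ = 1 := mul_inv_cancel₀ (hs i).ne'
    have hj : (Real.sqrt (μ j))⁻¹ * Real.sqrt (μ j) = 1 := inv_mul_cancel₀ (hs j).ne'
    calc Real.sqrt (μ i) * z i *
          (δ * ((Real.sqrt (μ i))⁻¹ * G i j * (Real.sqrt (μ j))⁻¹) * (Real.sqrt (μ j) * z j))
        = (Real.sqrt (μ i) * (Real.sqrt (μ i))⁻¹) * ((Real.sqrt (μ j))⁻¹ * Real.sqrt (μ j)) *
          (δ * (z i * (G i j * z j))) := by ring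
      _ = δ * (z i * (G i j * z j)) := by rw [hi, hj]; ring

lemma posdef_quad (T : Matrix (Fin N) (Fin N) ℝ) (hT : T.IsHermitian)
    (hev : ∀ i, 0 < hT.eigenvalues i) (x : Fin N → ℝ) (hx : x ≠ 0) :
    0 < x ⬝ᵥ (T *ᵥ x) := by
  rcases Nat.eq_zero_or_pos N with h0 | hN
  · subst h0
    exact absurd (Subsingleton.elim x 0) hx
  haveI : Nonempty (Fin N) := ⟨⟨0, hN⟩⟩
  set c : ℝ := Finset.univ.inf' Finset.univ_nonempty hT.eigenvalues with hc
  have hcpos : 0 < c := by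
    rw [hc, Finset.lt_inf'_iff]
    exact fun i _ => hev i
  have hcle : ∀ i, c ≤ hT.eigenvalues i := fun i => Finset.inf'_le _ (Finset.mem_univ i)
  set U : Matrix (Fin N) (Fin N) ℝ := (hT.eigenvectorUnitary : Matrix (Fin N) (Fin N) ℝ)
    with hU
  have hUU : U * star U = 1 := (Matrix.mem_unitaryGroup_iff).mp hT.eigenvectorUnitary.2
  have h1 : T - c • 1 = U * (Matrix.diagonal (fun i => hT.eigenvalues i - c)) * star U := by
    have hc1 : (c • 1 : Matrix (Fin N) (Fin N) ℝ) = U * (c • 1) * star U := by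
      rw [Matrix.mul_smul, Matrix.mul_one, Matrix.smul_mul, hUU]
    have hdiag : Matrix.diagonal (RCLike.ofReal ∘ hT.eigenvalues) - (c • 1 : Matrix (Fin N) (Fin N) ℝ)
        = Matrix.diagonal (fun i => hT.eigenvalues i - c) := by
      ext i j
      rcases eq_or_ne i j with rfl | h
      · simp [Matrix.one_apply_eq, RCLike.ofReal_real_eq_id]
      · simp [Matrix.one_apply_ne h, Matrix.diagonal_apply_ne _ h]
    calc T - c • 1
        = U * Matrix.diagonal (RCLike.ofReal ∘ hT.eigenvalues) * star U - U * (c • 1) * star U := by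
          have hs := hT.spectral_theorem
          rw [Unitary.conjStarAlgAut_apply] at hs
          rw [← hc1]
          exact congrArg (· - c • 1) hs
      _ = U * (Matrix.diagonal (RCLike.ofReal ∘ hT.eigenvalues) - c • 1) * star U := by
          rw [Matrix.mul_sub, Matrix.sub_mul]
      _ = U * (Matrix.diagonal (fun i => hT.eigenvalues i - c)) * star U := by rw [hdiag]
  have hsemi : (T - c • 1).PosSemidef := by
    rw [h1, Matrix.star_eq_conjTranspose]
    exact (Matrix.posSemidef_diagonal_iff.mpr fun i => sub_nonneg.mpr (hcle i)).mul_mul_conjTranspose_same U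
  have h2 : x ⬝ᵥ (T *ᵥ x) = x ⬝ᵥ ((T - c • 1) *ᵥ x) + c * (x ⬝ᵥ x) := by
    rw [Matrix.sub_mulVec, dotProduct_sub, smul_mulVec, Matrix.one_mulVec,
      dotProduct_smul, smul_eq_mul]
    ring
  have h3 : 0 ≤ x ⬝ᵥ ((T - c • 1) *ᵥ x) := by
    have := hsemi.dotProduct_mulVec_nonneg x
    rwa [star_trivial] at this
  have h4 : 0 < x ⬝ᵥ x := by
    obtain ⟨i0, hi0⟩ := Function.ne_iff.mp hx
    simp only [dotProduct]
    refine Finset.sum_pos' (fun i _ => mul_self_nonneg _)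
      ⟨i0, Finset.mem_univ _, mul_self_pos.mpr hi0⟩
  rw [h2]
  have := mul_pos hcpos h4
  linarith

lemma mem_spectrum_iff_exists_real (M : Matrix (Fin N) (Fin N) ℝ) (z : ℝ) :
    z ∈ spectrum ℝ M ↔ ∃ v, v ≠ 0 ∧ M *ᵥ v = z • v := by
  rw [spectrum.mem_iff, Algebra.algebraMap_eq_smul_one, Matrix.isUnit_iff_isUnit_det,
    isUnit_iff_ne_zero, not_not, ← Matrix.exists_mulVec_eq_zero_iff]
  constructor
  · rintro ⟨v, hv, h⟩
    refine ⟨v, hv, ?_⟩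
    rw [sub_mulVec, smul_mulVec, one_mulVec, sub_eq_zero] at h
    exact h.symm
  · rintro ⟨v, hv, h⟩
    refine ⟨v, hv, ?_⟩
    rw [sub_mulVec, smul_mulVec, one_mulVec, h, sub_self]

lemma main1_rev (G : Matrix (Fin N) (Fin N) ℝ) (hsym : Gᵀ = G)
    (μ : Fin N → ℝ) (hμ : ∀ i, 0 < μ i) (δ : ℝ)
    (contr : specRad (δ • (Matrix.diagonal fun i => (μ i)⁻¹) * G) < 1) :
    ∀ z : Fin N → ℝ, z ≠ 0 → 0 < z ⬝ᵥ ((Matrix.diagonal μ - δ • G) *ᵥ z) := by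
  intro z hz
  set S : Matrix (Fin N) (Fin N) ℝ :=
    δ • ((Matrix.diagonal fun i => (Real.sqrt (μ i))⁻¹) * G *
      (Matrix.diagonal fun i => (Real.sqrt (μ i))⁻¹)) with hSdef
  have hT : (1 - S).IsHermitian := (Matrix.isHermitian_one).sub (S_herm G hsym μ δ)
  suffices hevpos : ∀ i, 0 < hT.eigenvalues i by
    have hx : (fun i => Real.sqrt (μ i) * z i) ≠ 0 := by
      obtain ⟨i0, hi0⟩ := Function.ne_iff.mp hz
      intro h0
      have := congrFun h0 i0
      simp only [Pi.zero_apply] at this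
      exact hi0 ((mul_eq_zero.mp this).resolve_left (Real.sqrt_pos.mpr (hμ i0)).ne')
    have hpd := posdef_quad (1 - S) hT hevpos _ hx
    rw [hSdef, quad_transfer G μ hμ δ z] at hpd
    exact hpd
  intro i
  set t := hT.eigenvalues i with htdef
  have ht : t ∈ spectrum ℝ (1 - S) := hT.eigenvalues_mem_spectrum_real i
  obtain ⟨u, hu, hTu⟩ := (mem_spectrum_iff_exists_real _ t).mp ht
  have hSu : S *ᵥ u = (1 - t) • u := by
    rw [Matrix.sub_mulVec, Matrix.one_mulVec] at hTu
    funext k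
    have := congrFun hTu k
    simp only [Pi.sub_apply, Pi.smul_apply, smul_eq_mul] at this ⊢
    linarith [this]
  obtain ⟨w, hw, hBw⟩ := S_eig_to_B G μ hμ δ hu hSu
  have hspec : ((1 - t : ℝ) : ℂ) ∈ spectrum ℂ
      ((δ • (Matrix.diagonal fun i => (μ i)⁻¹) * G).map (algebraMap ℝ ℂ)) :=
    (real_mem_spectrum_iff _ _).mpr ⟨w, hw, hBw⟩
  have hmem : |1 - t| ∈ spAbs (δ • (Matrix.diagonal fun i => (μ i)⁻¹) * G) :=
    ⟨_, hspec, by rw [Complex.norm_real, Real.norm_eq_abs]⟩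
  have hlt : |1 - t| < 1 := lt_of_le_of_lt (le_specRad _ hmem) contr
  have := abs_lt.mp hlt
  linarith [this.1, this.2]

lemma main1_fwd (G : Matrix (Fin N) (Fin N) ℝ) (hsym : Gᵀ = G) (hpos : ∀ i j, 0 ≤ G i j)
    (μ : Fin N → ℝ) (hμ : ∀ i, 0 < μ i) (δ : ℝ) (hδ : 0 ≤ δ)
    (h : ∀ z : Fin N → ℝ, z ≠ 0 → 0 < z ⬝ᵥ ((Matrix.diagonal μ - δ • G) *ᵥ z)) :
    specRad (δ • (Matrix.diagonal fun i => (μ i)⁻¹) * G) < 1 := by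
  rw [specRad_lt_one_iff]
  rintro r ⟨zc, hz, rfl⟩
  obtain ⟨ρ, rfl⟩ := spec_B_real G hsym μ hμ δ hz
  obtain ⟨v, hv, heig⟩ := (real_mem_spectrum_iff _ _).mp hz
  rw [Complex.norm_real, Real.norm_eq_abs]
  exact abs_eig_lt_one G hsym hpos μ hμ δ hδ h hv heig

lemma specRad_zero_lt_one : specRad (0 : Matrix (Fin N) (Fin N) ℝ) < 1 := by
  rw [specRad_lt_one_iff]
  rintro r ⟨z, hz, rfl⟩
  have h0 : (0 : Matrix (Fin N) (Fin N) ℝ).map (algebraMap ℝ ℂ) = 0 := by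
    ext i j; simp
  rw [h0, mem_spectrum_iff_det, sub_zero, Matrix.det_smul, Matrix.det_one, mul_one] at hz
  rcases Nat.eq_zero_or_pos (Fintype.card (Fin N)) with hc | hc
  · rw [hc, pow_zero] at hz
    exact absurd hz one_ne_zero
  · have : z = 0 := by
      exact pow_eq_zero_iff (M₀ := ℂ) hc.ne' |>.mp hz
    simp [this]

lemma spAbs_smul (A : Matrix (Fin N) (Fin N) ℝ) {δ : ℝ} (hδ : 0 < δ) :
    spAbs (δ • A) = (fun r => δ * r) '' spAbs A := by
  have hmap : (δ • A).map (algebraMap ℝ ℂ) = (δ : ℂ) • A.map (algebraMap ℝ ℂ) := by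
    ext i j
    simp only [Matrix.map_apply, Matrix.smul_apply, smul_eq_mul, Complex.coe_algebraMap]
    push_cast
    ring
  have hδC : (δ : ℂ) ≠ 0 := Complex.ofReal_ne_zero.mpr hδ.ne'
  have hkey : ∀ z : ℂ, z ∈ spectrum ℂ ((δ • A).map (algebraMap ℝ ℂ)) ↔
      (z / δ) ∈ spectrum ℂ (A.map (algebraMap ℝ ℂ)) := by
    intro z
    rw [hmap, mem_spectrum_iff_det, mem_spectrum_iff_det]
    have hfac : z • (1 : Matrix (Fin N) (Fin N) ℂ) - (δ : ℂ) • A.map (algebraMap ℝ ℂ)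
        = (δ : ℂ) • ((z / δ) • (1 : Matrix (Fin N) (Fin N) ℂ) - A.map (algebraMap ℝ ℂ)) := by
      rw [smul_sub, smul_smul, mul_div_cancel₀ _ hδC]
    rw [hfac, Matrix.det_smul]
    constructor
    · intro hh
      rcases mul_eq_zero.mp hh with h1 | h1
      · exact absurd h1 (pow_ne_zero _ hδC)
      · exact h1
    · intro hh
      rw [hh, mul_zero]
  ext r
  constructor
  · rintro ⟨z, hz, rfl⟩
    refine ⟨‖z / δ‖, ⟨z / δ, (hkey z).mp hz, rfl⟩, ?_⟩
    rw [norm_div, Complex.norm_real, Real.norm_eq_abs, abs_of_pos hδ]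
    field_simp
  · rintro ⟨s, ⟨w, hw, rfl⟩, rfl⟩
    refine ⟨(δ : ℂ) * w, ?_, ?_⟩
    · rw [hkey]
      rwa [mul_div_cancel_left₀ _ hδC]
    · show δ * ‖w‖ = ‖(δ : ℂ) * w‖
      rw [norm_mul, Complex.norm_real, Real.norm_eq_abs, abs_of_pos hδ]

lemma specRad_smul (A : Matrix (Fin N) (Fin N) ℝ) {δ : ℝ} (hδ : 0 < δ) :
    specRad (δ • A) = δ * specRad A := by
  rw [specRad_eq, specRad_eq, spAbs_smul A hδ]
  rcases Set.eq_empty_or_nonempty (spAbs A) with h | h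
  · rw [h]
    simp [Real.sSup_empty]
  · have hbddA := (spAbs_finite A).bddAbove
    have hbdd2 := ((spAbs_finite A).image (fun r => δ * r)).bddAbove
    apply le_antisymm
    · obtain ⟨w0, hw0⟩ := h
      have hs0 : 0 ≤ sSup (spAbs A) := le_trans (spAbs_nonneg A hw0) (le_csSup hbddA hw0)
      refine Real.sSup_le ?_ (mul_nonneg hδ.le hs0)
      rintro r ⟨w, hw, rfl⟩
      exact mul_le_mul_of_nonneg_left (le_csSup hbddA hw) hδ.le
    · have hmem : sSup (spAbs A) ∈ spAbs A := (h.csSup_mem (spAbs_finite A))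
      exact le_csSup hbdd2 ⟨_, hmem, rfl⟩

end SpecRadAux

/-- For a symmetric, entrywise nonnegative network `G`, the contraction condition
`ρ(δ D⁻¹ |G|) < 1` and the variational condition (`D − δ (G + Gᵀ)/2` positive
definite) are equivalent, and both are equivalent to `δ ρ(D⁻¹ G) < 1`. -/
theorem contraction_iff_variational_symmetric_nonneg {N : ℕ}
    (G : Matrix (Fin N) (Fin N) ℝ) (hsym : Gᵀ = G) (hpos : ∀ i j, 0 ≤ G i j)
    (μ : Fin N → ℝ) (hμ : ∀ i, 0 < μ i) (δ : ℝ) (hδ : 0 ≤ δ) :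
    (specRad (δ • (Matrix.diagonal fun i => (μ i)⁻¹) *
        Matrix.of (fun i j => |G i j|)) < 1 ↔
      ∀ z : Fin N → ℝ, z ≠ 0 →
        0 < z ⬝ᵥ ((Matrix.diagonal μ - δ • ((2 : ℝ)⁻¹ • (G + Gᵀ))) *ᵥ z)) ∧
    (specRad (δ • (Matrix.diagonal fun i => (μ i)⁻¹) *
        Matrix.of (fun i j => |G i j|)) < 1 ↔
      δ * specRad ((Matrix.diagonal fun i => (μ i)⁻¹) * G) < 1) := by
  have habs : Matrix.of (fun i j => |G i j|) = G := by
    ext i j; exact abs_of_nonneg (hpos i j)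
  have hGG : δ • ((2 : ℝ)⁻¹ • (G + Gᵀ)) = δ • G := by
    rw [hsym]
    ext i j
    simp only [Matrix.smul_apply, Matrix.add_apply, smul_eq_mul]
    ring
  rw [habs, hGG]
  refine ⟨⟨fun hc => SpecRadAux.main1_rev G hsym μ hμ δ hc,
    fun hv => SpecRadAux.main1_fwd G hsym hpos μ hμ δ hδ hv⟩, ?_⟩
  rcases eq_or_lt_of_le hδ with h0 | hδpos
  · have hzero : (0 : ℝ) • (Matrix.diagonal fun i => (μ i)⁻¹) * G = 0 := by
      rw [zero_smul, Matrix.zero_mul]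
    rw [← h0, hzero, zero_mul]
    exact iff_of_true SpecRadAux.specRad_zero_lt_one zero_lt_one
  · rw [Matrix.smul_mul, SpecRadAux.specRad_smul _ hδpos]
end

section
/- Let G be an N×N real matrix with nonnegative entries, let μ_1,…,μ_N > 0, D = diag(μ_1,…,μ_N), δ ≥ 0 with ρ(δ·D^{-1}·G) < 1, and let P = diag(d_1,…,d_N) with d_i ≥ μ_i for all i. Then (P − δG)^{-1} ≤ (D − δG)^{-1} entrywise, and consequently [𝟙ᵀ(P − δG)^{-1}]_i ≤ [𝟙ᵀ(D − δG)^{-1}]_i for every coordinate i, where 𝟙 is the all-ones vector. Moreover, if d_i = μ_i for all i (i.e. P = D), equality holds. -/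
open Matrix

section Helpers

open Filter Finset

attribute [local instance] Matrix.linftyOpNormedRing Matrix.linftyOpNormedAlgebra

lemma pow_entry_eventually_le {N : ℕ} (A : Matrix (Fin N) (Fin N) ℝ)
    (h : ∀ z ∈ spectrum ℂ (A.map (algebraMap ℝ ℂ)), ‖z‖ < 1) :
    ∃ r : ℝ, 0 ≤ r ∧ r < 1 ∧
      ∀ᶠ n : ℕ in atTop, ∀ i j, |(A ^ n) i j| ≤ r ^ n := by
  rcases Nat.eq_zero_or_pos N with h0 | hpos
  · subst h0
    exact ⟨1/2, by norm_num, by norm_num, Eventually.of_forall fun n i _ => i.elim0⟩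
  haveI : Nonempty (Fin N) := ⟨⟨0, hpos⟩⟩
  haveI : CompleteSpace (Matrix (Fin N) (Fin N) ℂ) := FiniteDimensional.complete ℂ _
  set Ac : Matrix (Fin N) (Fin N) ℂ := A.map (algebraMap ℝ ℂ) with hAc
  have hρ : spectralRadius ℂ Ac < 1 := by
    have := spectrum.spectralRadius_lt_of_forall_lt (a := Ac) (r := 1)
      (fun z hz => by
        have h1 : ‖z‖ < 1 := by exact h z hz
        exact_mod_cast h1)
    simpa using this
  obtain ⟨r, hr1, hr2⟩ := exists_between hρ
  have hrne : r ≠ ⊤ := (hr2.trans_le le_top).ne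
  set r' : NNReal := r.toNNReal with hr'
  have hrr' : r = (r' : ENNReal) := (ENNReal.coe_toNNReal hrne).symm
  have hr'1 : (r' : ℝ) < 1 := by
    have := hr2; rw [hrr'] at this; exact_mod_cast this
  have hG := spectrum.pow_nnnorm_pow_one_div_tendsto_nhds_spectralRadius Ac
  have hev : ∀ᶠ n : ℕ in atTop, (‖Ac ^ n‖₊ : ENNReal) ^ (1/(n:ℝ)) < r :=
    hG.eventually_lt_const hr1
  have hpow : ∀ n, Ac ^ n = (A ^ n).map (algebraMap ℝ ℂ) := by
    intro n
    rw [hAc]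
    exact (map_pow ((algebraMap ℝ ℂ).mapMatrix) A n).symm
  refine ⟨r', r'.coe_nonneg, hr'1, ?_⟩
  filter_upwards [hev, eventually_ge_atTop 1] with n hn hn1 i j
  have hnn : (n : ℝ) ≠ 0 := by positivity
  have hlt : (‖Ac ^ n‖₊ : ENNReal) < r ^ (n : ℝ) := by
    have := ENNReal.rpow_lt_rpow hn (by positivity : (0:ℝ) < (n:ℝ))
    rwa [← ENNReal.rpow_mul, one_div, inv_mul_cancel₀ hnn, ENNReal.rpow_one] at this
  have hlt2 : ‖Ac ^ n‖ ≤ (r' : ℝ) ^ n := by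
    rw [hrr', ← ENNReal.coe_rpow_of_nonneg _ (by positivity : (0:ℝ) ≤ (n:ℝ))] at hlt
    have := ENNReal.coe_lt_coe.mp hlt
    have h2 : ‖Ac ^ n‖₊ ≤ r' ^ n := by
      rw [← NNReal.rpow_natCast]
      exact this.le
    calc ‖Ac ^ n‖ = ((‖Ac ^ n‖₊ : ℝ)) := rfl
    _ ≤ ((r' ^ n : NNReal) : ℝ) := by exact_mod_cast h2
    _ = (r' : ℝ) ^ n := by push_cast; ring
  have hentry : |(A ^ n) i j| ≤ ‖Ac ^ n‖ := by
    have e1 : (Ac ^ n) i j = ((A ^ n) i j : ℂ) := by rw [hpow n]; rfl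
    have e2 : ‖(Ac ^ n) i j‖ = |(A ^ n) i j| := by
      rw [e1, Complex.norm_real]; rfl
    rw [← e2, Matrix.linfty_opNorm_def]
    calc ‖(Ac ^ n) i j‖ ≤ ∑ j', ‖(Ac ^ n) i j'‖ :=
      Finset.single_le_sum (fun _ _ => norm_nonneg _) (Finset.mem_univ j)
    _ = ((∑ j' : Fin N, ‖(Ac ^ n) i j'‖₊ : NNReal) : ℝ) := by push_cast; rfl
    _ ≤ _ := by
        exact_mod_cast Finset.le_sup (f := fun i => ∑ j', ‖(Ac ^ n) i j'‖₊) (Finset.mem_univ i)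
  exact hentry.trans hlt2

lemma pow_entry_nonneg {N : ℕ} {A : Matrix (Fin N) (Fin N) ℝ}
    (hA : ∀ i j, 0 ≤ A i j) : ∀ (n : ℕ) i j, 0 ≤ (A ^ n) i j := by
  intro n
  induction n with
  | zero => intro i j; by_cases h : i = j <;> simp [pow_zero, Matrix.one_apply, h]
  | succ n ih =>
      intro i j
      rw [pow_succ, Matrix.mul_apply]
      exact Finset.sum_nonneg fun k _ => mul_nonneg (ih i k) (hA k j)

lemma telescope_hasSum {g : ℕ → ℝ} (hg : Summable g) (hg0 : ∀ n, 0 ≤ g n) :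
    HasSum (fun n => g n - g (n + 1)) (g 0) := by
  have hsh : Summable fun n => g (n + 1) := (summable_nat_add_iff 1).mpr hg
  have hnorm : Summable fun n => ‖g n - g (n + 1)‖ := by
    refine Summable.of_nonneg_of_le (fun n => norm_nonneg _)
      (fun n => ?_) (hg.add hsh)
    calc ‖g n - g (n + 1)‖ ≤ ‖g n‖ + ‖g (n + 1)‖ := norm_sub_le _ _
    _ = g n + g (n + 1) := by rw [Real.norm_of_nonneg (hg0 n), Real.norm_of_nonneg (hg0 _)]
  rw [hasSum_iff_tendsto_nat_of_summable_norm hnorm]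
  have h1 : ∀ n, ∑ i ∈ range n, (g i - g (i + 1)) = g 0 - g n :=
    fun n => Finset.sum_range_sub' g n
  simp only [h1]
  have h2 : Tendsto g atTop (nhds 0) := hg.tendsto_atTop_zero
  simpa using tendsto_const_nhds.sub h2

lemma neumann {N : ℕ} (A : Matrix (Fin N) (Fin N) ℝ)
    (hA : ∀ i j, 0 ≤ A i j)
    (hsum : ∀ i j, Summable fun n : ℕ => (A ^ n) i j) :
    (1 - A) * (Matrix.of fun i j => ∑' n : ℕ, (A ^ n) i j) = 1 ∧
    (Matrix.of fun i j => ∑' n : ℕ, (A ^ n) i j) * (1 - A) = 1 := by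
  set S : Matrix (Fin N) (Fin N) ℝ := Matrix.of fun i j => ∑' n : ℕ, (A ^ n) i j with hS
  have hleft : ∀ (M : Matrix (Fin N) (Fin N) ℝ) i j,
      (M * S) i j = ∑' n : ℕ, (M * A ^ n) i j := by
    intro M i j
    rw [Matrix.mul_apply]
    have h1 : ∀ k, M i k * (S k j) = ∑' n : ℕ, M i k * (A ^ n) k j := by
      intro k; rw [hS]; exact (tsum_mul_left).symm
    simp only [h1]
    rw [← Summable.tsum_finsetSum (fun k _ => (hsum k j).mul_left (M i k))]
    simp only [Matrix.mul_apply]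
  have hright : ∀ (M : Matrix (Fin N) (Fin N) ℝ) i j,
      (S * M) i j = ∑' n : ℕ, (A ^ n * M) i j := by
    intro M i j
    rw [Matrix.mul_apply]
    have h1 : ∀ k, (S i k) * M k j = ∑' n : ℕ, (A ^ n) i k * M k j := by
      intro k; rw [hS]; exact (tsum_mul_right).symm
    simp only [h1]
    rw [← Summable.tsum_finsetSum (fun k _ => (hsum i k).mul_right (M k j))]
    simp only [Matrix.mul_apply]
  constructor
  · ext i j
    rw [hleft]
    have h2 : ∀ n : ℕ, ((1 - A) * A ^ n) i j = (A ^ n) i j - (A ^ (n + 1)) i j := by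
      intro n
      rw [sub_mul, one_mul, ← pow_succ']
      rfl
    simp only [h2]
    exact ((telescope_hasSum (hsum i j) (fun n => pow_entry_nonneg hA n i j)).tsum_eq).trans
      (by simp [Matrix.one_apply])
  · ext i j
    rw [hright]
    have h2 : ∀ n : ℕ, (A ^ n * (1 - A)) i j = (A ^ n) i j - (A ^ (n + 1)) i j := by
      intro n
      rw [mul_sub, mul_one, ← pow_succ]
      rfl
    simp only [h2]
    exact ((telescope_hasSum (hsum i j) (fun n => pow_entry_nonneg hA n i j)).tsum_eq).trans
      (by simp [Matrix.one_apply])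

end Helpers

/-- Under the contraction condition `ρ(δ D⁻¹ G) < 1` with `G` entrywise nonnegative,
and `P = diag(d)` with `d_i ≥ μ_i`: `(P − δG)⁻¹ ≤ (D − δG)⁻¹` entrywise, hence
`[𝟙ᵀ (P − δG)⁻¹]_i ≤ [𝟙ᵀ (D − δG)⁻¹]_i` for every `i`; with equality when `d = μ`. -/
theorem inverse_entrywise_bound {N : ℕ}
    (G : Matrix (Fin N) (Fin N) ℝ) (hG : ∀ i j, 0 ≤ G i j)
    (μ : Fin N → ℝ) (hμ : ∀ i, 0 < μ i) (δ : ℝ) (hδ : 0 ≤ δ)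
    (hcontr : specRad (δ • (Matrix.diagonal fun i => (μ i)⁻¹) * G) < 1)
    (d : Fin N → ℝ) (hd : ∀ i, μ i ≤ d i) :
    (∀ i j, ((Matrix.diagonal d - δ • G)⁻¹) i j ≤
      ((Matrix.diagonal μ - δ • G)⁻¹) i j) ∧
    (∀ i : Fin N,
      ((fun _ => (1 : ℝ)) ᵥ* (Matrix.diagonal d - δ • G)⁻¹) i ≤
      ((fun _ => (1 : ℝ)) ᵥ* (Matrix.diagonal μ - δ • G)⁻¹) i) ∧
    ((∀ i, d i = μ i) →
      ∀ i : Fin N,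
        ((fun _ => (1 : ℝ)) ᵥ* (Matrix.diagonal d - δ • G)⁻¹) i =
        ((fun _ => (1 : ℝ)) ᵥ* (Matrix.diagonal μ - δ • G)⁻¹) i) := by
  have hdpos : ∀ i, 0 < d i := fun i => (hμ i).trans_le (hd i)
  set A : Matrix (Fin N) (Fin N) ℝ := δ • (Matrix.diagonal fun i => (μ i)⁻¹) * G with hAdef
  set B : Matrix (Fin N) (Fin N) ℝ := δ • (Matrix.diagonal fun i => (d i)⁻¹) * G with hBdef
  have hAentry : ∀ i j, A i j = δ * ((μ i)⁻¹ * G i j) := by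
    intro i j
    rw [hAdef, smul_mul_assoc, Matrix.smul_apply, Matrix.diagonal_mul, smul_eq_mul]
  have hBentry : ∀ i j, B i j = δ * ((d i)⁻¹ * G i j) := by
    intro i j
    rw [hBdef, smul_mul_assoc, Matrix.smul_apply, Matrix.diagonal_mul, smul_eq_mul]
  have hA0 : ∀ i j, 0 ≤ A i j := fun i j => by
    rw [hAentry]
    exact mul_nonneg hδ (mul_nonneg (inv_nonneg.mpr (hμ i).le) (hG i j))
  have hB0 : ∀ i j, 0 ≤ B i j := fun i j => by
    rw [hBentry]
    exact mul_nonneg hδ (mul_nonneg (inv_nonneg.mpr (hdpos i).le) (hG i j))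
  have hBA : ∀ i j, B i j ≤ A i j := fun i j => by
    rw [hAentry, hBentry]
    exact mul_le_mul_of_nonneg_left
      (mul_le_mul_of_nonneg_right (inv_anti₀ (hμ i) (hd i)) (hG i j)) hδ
  -- spectrum condition
  have hspec : ∀ z ∈ spectrum ℂ (A.map (algebraMap ℝ ℂ)), ‖z‖ < 1 := by
    intro z hz
    have hset : {r : ℝ | ∃ z : ℂ, z ∈ spectrum ℂ (A.map (algebraMap ℝ ℂ)) ∧ r = ‖z‖}
        = (fun z : ℂ => ‖z‖) '' spectrum ℂ (A.map (algebraMap ℝ ℂ)) := by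
      ext x
      simp [Set.mem_image, eq_comm]
    have hfin : {r : ℝ | ∃ z : ℂ, z ∈ spectrum ℂ (A.map (algebraMap ℝ ℂ)) ∧
        r = ‖z‖}.Finite := by
      rw [hset]
      exact (Matrix.finite_spectrum _).image _
    have hmem : ‖z‖ ∈ {r : ℝ | ∃ z : ℂ,
        z ∈ spectrum ℂ (A.map (algebraMap ℝ ℂ)) ∧ r = ‖z‖} := ⟨z, hz, rfl⟩
    have h1 : ‖z‖ ≤ specRad A := le_csSup hfin.bddAbove hmem
    exact h1.trans_lt hcontr
  obtain ⟨r, hr0, hr1, hev⟩ := pow_entry_eventually_le A hspec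
  have hsumA : ∀ i j, Summable fun n : ℕ => (A ^ n) i j := by
    intro i j
    refine Summable.of_norm_bounded_eventually_nat (g := fun n => r ^ n)
      (summable_geometric_of_lt_one hr0 hr1) ?_
    filter_upwards [hev] with n hn
    simpa [Real.norm_eq_abs] using hn i j
  have hpowBA : ∀ (n : ℕ) i j, (B ^ n) i j ≤ (A ^ n) i j := by
    intro n
    induction n with
    | zero => intro i j; simp
    | succ n ih =>
        intro i j
        rw [pow_succ, pow_succ, Matrix.mul_apply, Matrix.mul_apply]
        refine Finset.sum_le_sum fun k _ => ?_
        exact mul_le_mul (ih i k) (hBA k j) (hB0 k j) (pow_entry_nonneg hA0 n i k)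
  have hsumB : ∀ i j, Summable fun n : ℕ => (B ^ n) i j := fun i j =>
    Summable.of_nonneg_of_le (fun n => pow_entry_nonneg hB0 n i j)
      (fun n => hpowBA n i j) (hsumA i j)
  set SA : Matrix (Fin N) (Fin N) ℝ := Matrix.of fun i j => ∑' n : ℕ, (A ^ n) i j with hSA
  set SB : Matrix (Fin N) (Fin N) ℝ := Matrix.of fun i j => ∑' n : ℕ, (B ^ n) i j with hSB
  obtain ⟨hA1, _⟩ := neumann A hA0 hsumA
  obtain ⟨hB1, _⟩ := neumann B hB0 hsumB
  -- factorizations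
  have hfac : ∀ (v : Fin N → ℝ), (∀ i, v i ≠ 0) →
      Matrix.diagonal v - δ • G =
        Matrix.diagonal v * (1 - δ • (Matrix.diagonal fun i => (v i)⁻¹) * G) := by
    intro v hv
    rw [mul_sub, mul_one]
    congr 1
    rw [smul_mul_assoc, mul_smul_comm, ← Matrix.mul_assoc, Matrix.diagonal_mul_diagonal]
    have h3 : (fun i => v i * (v i)⁻¹) = fun _ => (1 : ℝ) :=
      funext fun i => mul_inv_cancel₀ (hv i)
    rw [h3, Matrix.diagonal_one, Matrix.one_mul]
  have hinv : ∀ (v : Fin N → ℝ) (hv : ∀ i, v i ≠ 0)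
      (S : Matrix (Fin N) (Fin N) ℝ)
      (hS1 : (1 - δ • (Matrix.diagonal fun i => (v i)⁻¹) * G) * S = 1),
      (Matrix.diagonal v - δ • G)⁻¹ = S * Matrix.diagonal (fun i => (v i)⁻¹) := by
    intro v hv S hS1
    apply Matrix.inv_eq_right_inv
    rw [hfac v hv, Matrix.mul_assoc, ← Matrix.mul_assoc _ S, hS1, Matrix.one_mul,
      Matrix.diagonal_mul_diagonal]
    have h3 : (fun i => v i * (v i)⁻¹) = fun _ => (1 : ℝ) :=
      funext fun i => mul_inv_cancel₀ (hv i)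
    rw [h3, Matrix.diagonal_one]
  have hinvA : (Matrix.diagonal μ - δ • G)⁻¹ = SA * Matrix.diagonal (fun i => (μ i)⁻¹) :=
    hinv μ (fun i => (hμ i).ne') SA hA1
  have hinvB : (Matrix.diagonal d - δ • G)⁻¹ = SB * Matrix.diagonal (fun i => (d i)⁻¹) :=
    hinv d (fun i => (hdpos i).ne') SB hB1
  have hSA0 : ∀ i j, 0 ≤ SA i j := fun i j =>
    tsum_nonneg fun n => pow_entry_nonneg hA0 n i j
  have hSBA : ∀ i j, SB i j ≤ SA i j := fun i j =>
    Summable.tsum_le_tsum (fun n => hpowBA n i j) (hsumB i j) (hsumA i j)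
  have key : ∀ i j, ((Matrix.diagonal d - δ • G)⁻¹) i j ≤
      ((Matrix.diagonal μ - δ • G)⁻¹) i j := by
    intro i j
    rw [hinvA, hinvB, Matrix.mul_diagonal, Matrix.mul_diagonal]
    exact mul_le_mul (hSBA i j) (inv_anti₀ (hμ j) (hd j))
      (inv_nonneg.mpr (hdpos j).le) (hSA0 i j)
  refine ⟨key, fun i => ?_, fun hdeq i => ?_⟩
  · simp only [Matrix.vecMul, dotProduct, one_mul]
    exact Finset.sum_le_sum fun k _ => key k i
  · rw [show d = μ from funext hdeq]
end

section
/- Let ε₁,…,ε_n be independent real random variables, each zero-mean and sub-Gaussian with variance proxy σ² (i.e. E[exp(λ·ε_t)] ≤ exp(λ²σ²/2) for all λ ∈ ℝ). Partition {1,…,n} into m ≤ n consecutive nonempty blocks B₁,…,B_m, and for 1 ≤ r ≤ s ≤ m set o_{rs} := |B_r ∪ ⋯ ∪ B_s| and T_{rs} := Σ_{t ∈ B_r ∪ ⋯ ∪ B_s} ε_t. Then for any constant D > 1, the probability that max_{1 ≤ r ≤ s ≤ m} |T_{rs}| / √(o_{rs}) ≥ 2σ·√(D·ln n) is at most ((n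 + 1)/n^D)²; equivalently, with probability at least 1 − ((n + 1)/n^D)², |T_{rs}| ≤ 2σ·√(D·ln n)·√(o_{rs}) simultaneously for all 1 ≤ r ≤ s ≤ m. -/
open MeasureTheory ProbabilityTheory

section Aux

variable {Ω : Type*} [MeasurableSpace Ω] {μ : Measure Ω}

lemma subg_integrable {X : Ω → ℝ} (hX : Measurable X) {t c : ℝ}
    (h : ∫⁻ ω, ENNReal.ofReal (Real.exp (t * X ω)) ∂μ ≤ ENNReal.ofReal (Real.exp c)) :
    Integrable (fun ω => Real.exp (t * X ω)) μ := by
  refine ⟨((hX.const_mul t).exp).aestronglyMeasurable, ?_⟩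
  rw [hasFiniteIntegral_iff_ofReal (ae_of_all _ fun ω => (Real.exp_pos _).le)]
  exact lt_of_le_of_lt h ENNReal.ofReal_lt_top

lemma subg_mgf_le {X : Ω → ℝ} (hX : Measurable X) {t c : ℝ}
    (h : ∫⁻ ω, ENNReal.ofReal (Real.exp (t * X ω)) ∂μ ≤ ENNReal.ofReal (Real.exp c)) :
    mgf X μ t ≤ Real.exp c := by
  rw [mgf, integral_eq_lintegral_of_nonneg_ae (ae_of_all _ fun ω => (Real.exp_pos _).le)
    ((hX.const_mul t).exp).aestronglyMeasurable]
  calc (∫⁻ ω, ENNReal.ofReal (Real.exp (t * X ω)) ∂μ).toReal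
      ≤ (ENNReal.ofReal (Real.exp c)).toReal := ENNReal.toReal_mono ENNReal.ofReal_ne_top h
    _ = Real.exp c := ENNReal.toReal_ofReal (Real.exp_pos _).le

lemma abs_tail_sum [IsProbabilityMeasure μ]
    {n : ℕ} {ε : Fin n → Ω → ℝ} (hmeas : ∀ t, Measurable (ε t))
    (hindep : iIndepFun ε μ)
    {σ : ℝ} (hσ : 0 < σ)
    (hsubg : ∀ t, ∀ lam : ℝ,
      ∫⁻ ω, ENNReal.ofReal (Real.exp (lam * ε t ω)) ∂μ ≤
        ENNReal.ofReal (Real.exp (lam ^ 2 * σ ^ 2 / 2)))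
    (S : Finset (Fin n)) (hS : 0 < S.card) {η : ℝ} (hη : 0 ≤ η) :
    μ {ω | η ≤ |∑ t ∈ S, ε t ω|} ≤
      ENNReal.ofReal (2 * Real.exp (-η ^ 2 / (2 * S.card * σ ^ 2))) := by
  have hcard : (0 : ℝ) < S.card := by exact_mod_cast hS
  have hσ2 : (0 : ℝ) < σ ^ 2 := by positivity
  set lam : ℝ := η / (S.card * σ ^ 2) with hlam_def
  have hlam : 0 ≤ lam := by positivity
  -- integrability of exp (t * sum) for any t
  have hint : ∀ t : ℝ, Integrable (fun ω => Real.exp (t * (∑ i ∈ S, ε i) ω)) μ := fun t =>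
    hindep.integrable_exp_mul_sum hmeas (fun i _ => subg_integrable (hmeas i) (hsubg i t))
  -- mgf bound for the sum
  have hmgf : ∀ t : ℝ, mgf (∑ i ∈ S, ε i) μ t ≤ Real.exp (t ^ 2 * S.card * σ ^ 2 / 2) := by
    intro t
    rw [hindep.mgf_sum hmeas S]
    calc ∏ i ∈ S, mgf (ε i) μ t ≤ ∏ i ∈ S, Real.exp (t ^ 2 * σ ^ 2 / 2) :=
          Finset.prod_le_prod (fun i _ => mgf_nonneg) (fun i _ => subg_mgf_le (hmeas i) (hsubg i t))
      _ = Real.exp (t ^ 2 * σ ^ 2 / 2) ^ S.card := Finset.prod_const _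
      _ = Real.exp (S.card * (t ^ 2 * σ ^ 2 / 2)) := by rw [← Real.exp_nat_mul]
      _ = Real.exp (t ^ 2 * S.card * σ ^ 2 / 2) := by ring_nf
  have hexp_eq : Real.exp (-lam * η) * Real.exp (lam ^ 2 * S.card * σ ^ 2 / 2)
      = Real.exp (-η ^ 2 / (2 * S.card * σ ^ 2)) := by
    rw [← Real.exp_add]
    congr 1
    rw [hlam_def]
    field_simp
    ring
  have hup : (μ {ω | η ≤ (∑ i ∈ S, ε i) ω}).toReal ≤
      Real.exp (-η ^ 2 / (2 * S.card * σ ^ 2)) := by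
    calc (μ {ω | η ≤ (∑ i ∈ S, ε i) ω}).toReal
        ≤ Real.exp (-lam * η) * mgf (∑ i ∈ S, ε i) μ lam :=
          measure_ge_le_exp_mul_mgf η hlam (hint lam)
      _ ≤ Real.exp (-lam * η) * Real.exp (lam ^ 2 * S.card * σ ^ 2 / 2) := by
          exact mul_le_mul_of_nonneg_left (hmgf lam) (Real.exp_pos _).le
      _ = _ := hexp_eq
  have hdown : (μ {ω | (∑ i ∈ S, ε i) ω ≤ -η}).toReal ≤
      Real.exp (-η ^ 2 / (2 * S.card * σ ^ 2)) := by
    calc (μ {ω | (∑ i ∈ S, ε i) ω ≤ -η}).toReal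
        ≤ Real.exp (-(-lam) * (-η)) * mgf (∑ i ∈ S, ε i) μ (-lam) :=
          measure_le_le_exp_mul_mgf (-η) (neg_nonpos.mpr hlam) (hint (-lam))
      _ ≤ Real.exp (-lam * η) * Real.exp (lam ^ 2 * S.card * σ ^ 2 / 2) := by
          have h2 : mgf (∑ i ∈ S, ε i) μ (-lam) ≤ Real.exp (lam ^ 2 * S.card * σ ^ 2 / 2) := by
            simpa [neg_pow] using hmgf (-lam)
          have h3 : -(-lam) * -η = -lam * η := by ring
          rw [h3]
          exact mul_le_mul_of_nonneg_left h2 (Real.exp_pos _).le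
      _ = _ := hexp_eq
  have hsubset : {ω | η ≤ |∑ t ∈ S, ε t ω|} ⊆
      {ω | η ≤ (∑ i ∈ S, ε i) ω} ∪ {ω | (∑ i ∈ S, ε i) ω ≤ -η} := by
    intro ω hω
    simp only [Set.mem_setOf_eq] at hω
    rcases le_abs.mp hω with h | h
    · left; simpa [Finset.sum_apply] using h
    · right; simp only [Set.mem_setOf_eq, Finset.sum_apply]
      linarith
  calc μ {ω | η ≤ |∑ t ∈ S, ε t ω|}
      ≤ μ ({ω | η ≤ (∑ i ∈ S, ε i) ω} ∪ {ω | (∑ i ∈ S, ε i) ω ≤ -η}) := measure_mono hsubset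
    _ ≤ μ {ω | η ≤ (∑ i ∈ S, ε i) ω} + μ {ω | (∑ i ∈ S, ε i) ω ≤ -η} := measure_union_le _ _
    _ ≤ ENNReal.ofReal (Real.exp (-η ^ 2 / (2 * S.card * σ ^ 2)))
        + ENNReal.ofReal (Real.exp (-η ^ 2 / (2 * S.card * σ ^ 2))) := by
        gcongr
        · rw [← ENNReal.ofReal_toReal (measure_ne_top μ _)]
          exact ENNReal.ofReal_le_ofReal hup
        · rw [← ENNReal.ofReal_toReal (measure_ne_top μ _)]
          exact ENNReal.ofReal_le_ofReal hdown
    _ = ENNReal.ofReal (2 * Real.exp (-η ^ 2 / (2 * S.card * σ ^ 2))) := by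
        rw [← ENNReal.ofReal_add (Real.exp_pos _).le (Real.exp_pos _).le]
        ring_nf

lemma two_mul_sum_range_sub (m : ℕ) :
    2 * (∑ i ∈ Finset.range m, (m - i)) = m * (m + 1) := by
  induction m with
  | zero => simp
  | succ k ih =>
    rw [Finset.sum_range_succ']
    simp only [Nat.succ_sub_succ_eq_sub, Nat.sub_zero]
    rw [Nat.mul_add 2]
    rw [ih]
    ring

end Aux

set_option maxHeartbeats 1000000 in
/-- Maximal inequality for sums of independent zero-mean sub-Gaussian variables over
unions of consecutive blocks: if `ε₁,…,ε_n` are independent, zero-mean and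
sub-Gaussian with variance proxy `σ²`, and `{1,…,n}` is partitioned into `m ≤ n`
consecutive nonempty blocks `B₁,…,B_m`, then for any `D > 1`, with `o_{rs}` the size
of `B_r ∪ ⋯ ∪ B_s` and `T_{rs}` the sum of the `ε_t` over this union, the probability
that `|T_{rs}| ≥ 2σ √(D ln n) √(o_{rs})` for some `r ≤ s` is at most
`((n+1)/n^D)²`. -/
theorem maximal_inequality_subgaussian_blocks
    {Ω : Type*} [MeasurableSpace Ω] (μ : Measure Ω) [IsProbabilityMeasure μ]
    (n m : ℕ) (hm : m ≤ n)
    (ε : Fin n → Ω → ℝ) (hmeas : ∀ t, Measurable (ε t))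
    (hindep : iIndepFun ε μ)
    (σ : ℝ) (hσ : 0 < σ)
    (hmean : ∀ t, ∫ ω, ε t ω ∂μ = 0)
    (hsubg : ∀ t, ∀ lam : ℝ,
      ∫⁻ ω, ENNReal.ofReal (Real.exp (lam * ε t ω)) ∂μ ≤
        ENNReal.ofReal (Real.exp (lam ^ 2 * σ ^ 2 / 2)))
    (B : Fin m → Finset (Fin n))
    (hBne : ∀ r, (B r).Nonempty)
    (hBcover : ∀ t : Fin n, ∃ r, t ∈ B r)
    (hBdisj : ∀ r s : Fin m, r ≠ s → Disjoint (B r) (B s))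
    (hBconsec : ∀ r s : Fin m, r < s → ∀ t ∈ B r, ∀ u ∈ B s, t < u)
    (D : ℝ) (hD : 1 < D) :
    μ {ω | ∃ r s : Fin m, r ≤ s ∧
        2 * σ * Real.sqrt (D * Real.log n) *
          Real.sqrt (((Finset.Icc r s).biUnion B).card) ≤
        |∑ t ∈ (Finset.Icc r s).biUnion B, ε t ω|} ≤
      ENNReal.ofReal ((((n : ℝ) + 1) / (n : ℝ) ^ D) ^ 2) := by
  classical
  rcases Nat.eq_zero_or_pos n with hn | hn
  · have hm0 : m = 0 := by omega
    have hempty : {ω | ∃ r s : Fin m, r ≤ s ∧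
        2 * σ * Real.sqrt (D * Real.log n) *
          Real.sqrt (((Finset.Icc r s).biUnion B).card) ≤
        |∑ t ∈ (Finset.Icc r s).biUnion B, ε t ω|} = ∅ := by
      ext ω
      simp only [Set.mem_setOf_eq, Set.mem_empty_iff_false, iff_false]
      rintro ⟨r, _⟩
      exact absurd r.isLt (by omega)
    rw [hempty, measure_empty]
    exact zero_le
  · have hn1 : (1 : ℝ) ≤ n := by exact_mod_cast hn
    have hnpos : (0 : ℝ) < n := by linarith
    have hlog : 0 ≤ Real.log n := Real.log_nonneg hn1
    have hD0 : (0 : ℝ) < D := by linarith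
    set c : ℝ := 2 * σ * Real.sqrt (D * Real.log n) with hc_def
    have hc : 0 ≤ c := by positivity
    set P : Finset (Fin m × Fin m) := Finset.univ.filter (fun p => p.1 ≤ p.2) with hP
    set E : Fin m × Fin m → Set Ω := fun p =>
      {ω | c * Real.sqrt (((Finset.Icc p.1 p.2).biUnion B).card) ≤
        |∑ t ∈ (Finset.Icc p.1 p.2).biUnion B, ε t ω|} with hE
    have hsub : {ω | ∃ r s : Fin m, r ≤ s ∧
        c * Real.sqrt (((Finset.Icc r s).biUnion B).card) ≤
        |∑ t ∈ (Finset.Icc r s).biUnion B, ε t ω|} ⊆ ⋃ p ∈ P, E p := by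
      rintro ω ⟨r, s, hrs, hle⟩
      have hmem : (r, s) ∈ P := by
        rw [hP, Finset.mem_filter]
        exact ⟨Finset.mem_univ _, hrs⟩
      simp only [Set.mem_iUnion, exists_prop]
      exact ⟨(r, s), hmem, hle⟩
    -- per-event bound
    have hb : ∀ p ∈ P, μ (E p) ≤ ENNReal.ofReal (2 * Real.exp (-(2 * D) * Real.log n)) := by
      intro p hp
      have hrs : p.1 ≤ p.2 := by
        have := Finset.mem_filter.mp (hP ▸ hp)
        exact this.2
      set S := (Finset.Icc p.1 p.2).biUnion B with hS_def
      have hScard : 0 < S.card := by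
        refine Finset.card_pos.mpr ?_
        obtain ⟨t, ht⟩ := hBne p.1
        exact ⟨t, Finset.mem_biUnion.mpr ⟨p.1, Finset.mem_Icc.mpr ⟨le_refl _, hrs⟩, ht⟩⟩
      have hcardR : (0 : ℝ) < S.card := by exact_mod_cast hScard
      have hη : 0 ≤ c * Real.sqrt (S.card : ℕ) := by positivity
      refine le_trans (abs_tail_sum hmeas hindep hσ hsubg S hScard hη) ?_
      apply ENNReal.ofReal_le_ofReal
      have hexp_eq : -(c * Real.sqrt (S.card : ℕ)) ^ 2 / (2 * (S.card : ℝ) * σ ^ 2)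
          = -(2 * D) * Real.log n := by
        have hsq : (c * Real.sqrt (S.card : ℕ)) ^ 2
            = 4 * σ ^ 2 * (D * Real.log n) * (S.card : ℝ) := by
          rw [mul_pow, Real.sq_sqrt hcardR.le, hc_def, mul_pow, mul_pow,
            Real.sq_sqrt (by positivity : (0:ℝ) ≤ D * Real.log n)]
          ring
        rw [hsq]
        field_simp
        ring
      rw [hexp_eq]
    -- counting
    have hPcard : 2 * P.card = m * (m + 1) := by
      have h1 : P.card = ∑ r : Fin m, (m - (r : ℕ)) := by
        rw [hP, Finset.card_filter, Fintype.sum_prod_type]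
        refine Finset.sum_congr rfl fun r _ => ?_
        rw [← Finset.card_filter]
        have hIci : Finset.univ.filter (fun s : Fin m => r ≤ s) = Finset.Ici r := by
          ext s; simp
        rw [hIci, Fin.card_Ici]
      rw [h1, Fin.sum_univ_eq_sum_range (fun i => m - i) m]
      exact two_mul_sum_range_sub m
    have hcount : (P.card : ℝ) * 2 ≤ ((n : ℝ) + 1) ^ 2 := by
      have h2 : P.card * 2 ≤ (n + 1) ^ 2 := by
        have : 2 * P.card = m * (m + 1) := hPcard
        nlinarith [hm, this]
      exact_mod_cast h2
    -- final real inequality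
    have hfinal : (P.card : ℝ) * (2 * Real.exp (-(2 * D) * Real.log n))
        ≤ (((n : ℝ) + 1) / (n : ℝ) ^ D) ^ 2 := by
      have hexp : Real.exp (-(2 * D) * Real.log n) = (n : ℝ) ^ (-(2 * D)) := by
        rw [Real.rpow_def_of_pos hnpos]
        ring_nf
      have hrpos : (0 : ℝ) < (n : ℝ) ^ (-(2 * D)) := Real.rpow_pos_of_pos hnpos _
      have hrw : (((n : ℝ) + 1) / (n : ℝ) ^ D) ^ 2
          = ((n : ℝ) + 1) ^ 2 * (n : ℝ) ^ (-(2 * D)) := by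
        rw [div_pow, ← Real.rpow_natCast ((n : ℝ) ^ D) 2, ← Real.rpow_mul hnpos.le]
        rw [div_eq_mul_inv, ← Real.rpow_neg hnpos.le]
        have h2 : -(D * ((2 : ℕ) : ℝ)) = -(2 * D) := by push_cast; ring
        rw [h2]
      rw [hexp, hrw, ← mul_assoc]
      exact mul_le_mul_of_nonneg_right hcount hrpos.le
    calc μ {ω | ∃ r s : Fin m, r ≤ s ∧
        c * Real.sqrt (((Finset.Icc r s).biUnion B).card) ≤
        |∑ t ∈ (Finset.Icc r s).biUnion B, ε t ω|}
        ≤ μ (⋃ p ∈ P, E p) := measure_mono hsub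
      _ ≤ ∑ p ∈ P, μ (E p) := measure_biUnion_finset_le P E
      _ ≤ ∑ _p ∈ P, ENNReal.ofReal (2 * Real.exp (-(2 * D) * Real.log n)) :=
          Finset.sum_le_sum hb
      _ = P.card • ENNReal.ofReal (2 * Real.exp (-(2 * D) * Real.log n)) :=
          Finset.sum_const _
      _ = ENNReal.ofReal ((P.card : ℝ) * (2 * Real.exp (-(2 * D) * Real.log n))) := by
          rw [nsmul_eq_mul, ← ENNReal.ofReal_natCast P.card,
            ← ENNReal.ofReal_mul (Nat.cast_nonneg P.card)]
      _ ≤ ENNReal.ofReal ((((n : ℝ) + 1) / (n : ℝ) ^ D) ^ 2) :=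
          ENNReal.ofReal_le_ofReal hfinal
end
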